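/- arXiv:2101.07860 — 5 statements merged into one kernel-verified Lean document; each statement's English description precedes it below -/
import Mathlib

section
/- Let E be a Hilbert space, S a Hilbert–Schmidt operator on E such that Id_E + S is self-adjoint and nonnegative. Then the operator √(Id_E + S) − Id_E is Hilbert–Schmidt on E. -/
open ContinuousLinearMap

/-- A bounded operator on a Hilbert space is Hilbert–Schmidt if the squared norms of its values
on some (ℕ-indexed) Hilbert basis are summable. -/
def IsHilbertSchmidt {E : Type*} [NormedAddCommGroup E] [InnerProductSpace ℝ E]
    [CompleteSpace E] (S : E →L[ℝ] E) : Prop :=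
  ∃ b : HilbertBasis ℕ ℝ E, Summable fun j => ‖S (b j)‖ ^ 2

/-- If `S` is Hilbert–Schmidt and `Id + S` is self-adjoint and nonnegative, then
`√(Id + S) − Id` is Hilbert–Schmidt.  Here `R` denotes the (unique) nonnegative self-adjoint
square root of `Id + S`. -/
theorem stmt1 {E : Type*} [NormedAddCommGroup E] [InnerProductSpace ℝ E] [CompleteSpace E]
    (S R : E →L[ℝ] E) (hS : IsHilbertSchmidt S)
    (hpos : (1 + S).IsPositive)
    (hRpos : R.IsPositive) (hRsq : R ∘L R = 1 + S) :
    IsHilbertSchmidt (R - 1) := by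
  obtain ⟨b, hb⟩ := hS
  have key : ∀ x : E, ‖(R - 1) x‖ ≤ ‖S x‖ := by
    intro x
    have hcomp : (R + 1) ∘L (R - 1) = S := by
      have : R ∘L R = 1 + S := hRsq
      have h2 : (R + 1) ∘L (R - 1) = R ∘L R - 1 := by
        simp only [add_comp, comp_sub, one_def, comp_id, id_comp]
        abel
      rw [h2, this]
      abel
    set y := (R - 1) x with hy
    have hSx : (R + 1) y = S x := by
      rw [hy, ← ContinuousLinearMap.comp_apply, hcomp]
    rw [← hSx]
    -- ‖y‖ ≤ ‖(R+1) y‖ since R is positive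
    have hlow : ‖y‖ ^ 2 ≤ ‖(R + 1) y‖ * ‖y‖ := by
      have h1 : (0:ℝ) ≤ inner ℝ (R y) y := hRpos.inner_nonneg_left y
      have h2 : (inner ℝ ((R + 1) y) y : ℝ) = inner ℝ (R y) y + ‖y‖ ^ 2 := by
        simp [inner_add_left, real_inner_self_eq_norm_sq]
      have h3 : ‖y‖ ^ 2 ≤ (inner ℝ ((R + 1) y) y : ℝ) := by
        rw [h2]; linarith
      calc ‖y‖ ^ 2 ≤ (inner ℝ ((R + 1) y) y : ℝ) := h3
        _ ≤ ‖(R + 1) y‖ * ‖y‖ := real_inner_le_norm _ _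
    rcases eq_or_ne y 0 with h | h
    · simp [h]
    · have hny : 0 < ‖y‖ := norm_pos_iff.mpr h
      nlinarith [sq_nonneg (‖y‖ - ‖(R + 1) y‖)]
  exact ⟨b, Summable.of_nonneg_of_le (fun j => by positivity)
    (fun j => by
      have := key (b j)
      have h0 : (0:ℝ) ≤ ‖(R - 1) (b j)‖ := norm_nonneg _
      nlinarith) hb⟩
end

section
/- Let E be a Hilbert space, K a compact operator on E such that Id_E + K is self-adjoint and nonnegative. Then √(Id_E + K) − Id_E is a compact operator on E. -/
open ContinuousLinearMap RealInnerProductSpace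

/-- If `K` is a compact operator and `Id + K` is self-adjoint and nonnegative, then
`√(Id + K) − Id` is a compact operator.  Here `R` denotes the (unique) nonnegative
self-adjoint square root of `Id + K`. -/
theorem stmt2 {E : Type*} [NormedAddCommGroup E] [InnerProductSpace ℝ E] [CompleteSpace E]
    (K R : E →L[ℝ] E) (hK : IsCompactOperator ⇑K)
    (hpos : (1 + K).IsPositive)
    (hRpos : R.IsPositive) (hRsq : R ∘L R = 1 + K) :
    IsCompactOperator ⇑(R - 1) := by
  set B : E →L[ℝ] E →L[ℝ] ℝ := (innerSL ℝ).comp (R + 1) with hB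
  have hcoer : IsCoercive B := by
    refine ⟨1, one_pos, fun u => ?_⟩
    have h1 : B u u = ⟪R u, u⟫ + ⟪u, u⟫ := by
      simp only [hB, comp_apply, innerSL_apply_apply, add_apply, one_apply_eq_self, inner_add_left]
    have h2 : (0:ℝ) ≤ ⟪R u, u⟫ := by
      have := hRpos.2 u
      simpa [reApplyInnerSelf_apply] using this
    have h3 : ⟪u, u⟫ = ‖u‖ * ‖u‖ := by
      rw [real_inner_self_eq_norm_mul_norm]
    rw [h1, h3]; linarith
  set e := hcoer.continuousLinearEquivOfBilin with he
  have heq : ∀ v, e v = (R + 1) v := by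
    intro v
    refine (hcoer.unique_continuousLinearEquivOfBilin (fun w => ?_)).symm
    simp [hB, inner_add_left]
  have hfac : ⇑(R - 1) = ⇑K ∘ ⇑e.symm := by
    funext x
    have h1 : (R - 1) ∘L (R + 1) = K := by
      ext v
      simp only [comp_apply, sub_apply, add_apply, one_apply_eq_self, map_add]
      have := congrFun (congrArg (fun (T : E →L[ℝ] E) => ⇑T) hRsq) v
      simp only [comp_apply, add_apply, one_apply_eq_self] at this
      rw [this]; abel
    have h2 : (R + 1) (e.symm x) = x := by
      rw [← heq, e.apply_symm_apply]
    calc (R - 1) x = (R - 1) ((R + 1) (e.symm x)) := by rw [h2]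
      _ = ((R - 1) ∘L (R + 1)) (e.symm x) := rfl
      _ = K (e.symm x) := by rw [h1]
  rw [hfac]
  exact hK.comp_clm (e.symm : E →L[ℝ] E)
end

section
/- Let E be a separable Hilbert space and T ∈ 𝓛(E). Then T is invertible on E with T T* − Id_E compact on E if and only if there exist an orthogonal (unitary) operator W on E and a self-adjoint compact operator K on E such that Id_E + K is invertible and T = W (Id_E + K). -/
open ContinuousLinearMap
open scoped InnerProductSpace NNReal

section Aux

variable {E : Type*} [NormedAddCommGroup E] [InnerProductSpace ℝ E] [CompleteSpace E]

/-- A selfadjoint operator whose quadratic form is bounded by `r` has norm at most `r`. -/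
lemma sa_norm_le {S : E →L[ℝ] E} (hS : IsSelfAdjoint S) {r : ℝ} (hr : 0 ≤ r)
    (h : ∀ v, |⟪S v, v⟫_ℝ| ≤ r * ‖v‖ ^ 2) : ‖S‖ ≤ r := by
  have hsymm := hS.isSymmetric
  have key : ∀ u w : E, ‖u‖ = 1 → ‖w‖ = 1 → ⟪S u, w⟫_ℝ ≤ r := by
    intro u w hu hw
    have e1 : ⟪S (u + w), u + w⟫_ℝ = ⟪S u, u⟫_ℝ + 2 * ⟪S u, w⟫_ℝ + ⟪S w, w⟫_ℝ := by
      have hsw : ⟪S w, u⟫_ℝ = ⟪S u, w⟫_ℝ := by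
        rw [real_inner_comm]; exact (hsymm u w).symm
      simp only [map_add, inner_add_left, inner_add_right]
      rw [hsw]; ring
    have e2 : ⟪S (u - w), u - w⟫_ℝ = ⟪S u, u⟫_ℝ - 2 * ⟪S u, w⟫_ℝ + ⟪S w, w⟫_ℝ := by
      have hsw : ⟪S w, u⟫_ℝ = ⟪S u, w⟫_ℝ := by
        rw [real_inner_comm]; exact (hsymm u w).symm
      simp only [map_sub, inner_sub_left, inner_sub_right]
      rw [hsw]; ring
    have b1 := (abs_le.mp (h (u + w))).2
    have b2 := (abs_le.mp (h (u - w))).1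
    have n1 : ‖u + w‖ ^ 2 = ‖u‖ ^ 2 + 2 * ⟪u, w⟫_ℝ + ‖w‖ ^ 2 := norm_add_sq_real u w
    have n2 : ‖u - w‖ ^ 2 = ‖u‖ ^ 2 - 2 * ⟪u, w⟫_ℝ + ‖w‖ ^ 2 := norm_sub_sq_real u w
    have hsum : r * ‖u + w‖ ^ 2 + r * ‖u - w‖ ^ 2 = 4 * r := by
      rw [n1, n2, hu, hw]; ring
    linarith
  refine opNorm_le_bound _ hr fun v => ?_
  rcases eq_or_ne (S v) 0 with hv | hv
  · simp [hv]; positivity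
  have hv0 : v ≠ 0 := by rintro rfl; simp at hv
  have hnv : ‖v‖ ≠ 0 := norm_ne_zero_iff.mpr hv0
  set u : E := ‖v‖⁻¹ • v with hu_def
  have hu : ‖u‖ = 1 := by
    rw [hu_def, norm_smul, norm_inv, norm_norm, inv_mul_cancel₀ hnv]
  have hSu : S u = ‖v‖⁻¹ • S v := by rw [hu_def, map_smul]
  have hSu0 : S u ≠ 0 := by
    rw [hSu]; exact smul_ne_zero (inv_ne_zero hnv) hv
  have hnSu : ‖S u‖ ≠ 0 := norm_ne_zero_iff.mpr hSu0
  set w : E := ‖S u‖⁻¹ • S u with hw_def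
  have hw : ‖w‖ = 1 := by
    rw [hw_def, norm_smul, norm_inv, norm_norm, inv_mul_cancel₀ hnSu]
  have hinner : ⟪S u, w⟫_ℝ = ‖S u‖ := by
    rw [hw_def, real_inner_smul_right, real_inner_self_eq_norm_sq, pow_two]
    field_simp
  have hSu_le : ‖S u‖ ≤ r := by rw [← hinner]; exact key u w hu hw
  have : ‖S v‖ = ‖v‖ * ‖S u‖ := by
    rw [hSu, norm_smul, norm_inv, norm_norm]; field_simp
  rw [this, mul_comm]
  exact mul_le_mul_of_nonneg_right hSu_le (norm_nonneg v)


set_option maxHeartbeats 1000000 in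
set_option synthInstance.maxHeartbeats 400000 in
/-- The hard (forward) direction in the nontrivial case. -/
theorem stmt3_forward (T : E →L[ℝ] E) [Nontrivial E] (hT : IsUnit T)
    (hTc : IsCompactOperator ⇑(T * adjoint T - 1)) :
    ∃ W K : E →L[ℝ] E,
        (adjoint W * W = 1 ∧ W * adjoint W = 1) ∧
        IsSelfAdjoint K ∧ IsCompactOperator ⇑K ∧ IsUnit (1 + K) ∧ T = W * (1 + K) := by
  classical
  obtain ⟨U, hU⟩ := hT
  set Ti : E →L[ℝ] E := ↑U⁻¹ with hTi_def
  have hUT : Ti * T = 1 := by rw [hTi_def, ← hU]; exact U.inv_mul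
  have hTU : T * Ti = 1 := by rw [hTi_def, ← hU]; exact U.mul_inv
  set A : E →L[ℝ] E := adjoint T * T with hA_def
  have hAsa : IsSelfAdjoint A := by
    rw [hA_def]
    simp only [IsSelfAdjoint, ← star_eq_adjoint, star_mul, star_star]
  -- A - 1 is compact
  have hAc : IsCompactOperator ⇑(A - 1) := by
    have hfact : Ti * ((T * adjoint T - 1) * T) = A - 1 := by
      have h1 : Ti * ((T * adjoint T - 1) * T) = (Ti * T) * (adjoint T * T) - Ti * T := by
        noncomm_ring
      rw [h1, hUT, one_mul, hA_def]
    rw [← hfact]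
    have : IsCompactOperator (⇑Ti ∘ ⇑(T * adjoint T - 1) ∘ ⇑T) :=
      (hTc.comp_clm T).clm_comp Ti
    simpa [Function.comp, mul_apply] using this
  -- norms
  have hT0 : T ≠ 0 := by
    rintro rfl
    rw [mul_zero] at hUT
    exact one_ne_zero hUT.symm
  have hTi0 : Ti ≠ 0 := by
    rintro h
    rw [h, zero_mul] at hUT
    exact one_ne_zero hUT.symm
  set c : ℝ := ‖T‖ ^ 2 with hc_def
  have hc : 0 < c := by
    have : 0 < ‖T‖ := norm_pos_iff.mpr hT0
    positivity
  set m : ℝ := ‖Ti‖ with hm_def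
  have hm : 0 < m := norm_pos_iff.mpr hTi0
  have hmc1 : 1 ≤ m ^ 2 * c := by
    have h1 : (1 : ℝ) ≤ m * ‖T‖ := by
      calc (1:ℝ) = ‖(1 : E →L[ℝ] E)‖ := norm_one.symm
        _ = ‖Ti * T‖ := by rw [hUT]
        _ ≤ m * ‖T‖ := norm_mul_le Ti T
    calc (1:ℝ) = 1 * 1 := (one_mul 1).symm
      _ ≤ (m * ‖T‖) * (m * ‖T‖) := by nlinarith [norm_nonneg T]
      _ = m ^ 2 * c := by rw [hc_def]; ring
  set δ : ℝ := (m ^ 2 * c)⁻¹ with hδ_def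
  have hδ0 : 0 < δ := by positivity
  have hδ1 : δ ≤ 1 := by
    rw [hδ_def]
    exact inv_le_one_of_one_le₀ hmc1
  set q : ℝ := 1 - δ with hq_def
  have hq0 : 0 ≤ q := by linarith
  have hq1 : q < 1 := by linarith
  -- quadratic form of A
  have hAquad : ∀ v : E, ⟪A v, v⟫_ℝ = ‖T v‖ ^ 2 := by
    intro v
    rw [hA_def, ContinuousLinearMap.mul_apply, adjoint_inner_left, real_inner_self_eq_norm_sq]
  have hTv_ub : ∀ v : E, ‖T v‖ ^ 2 ≤ c * ‖v‖ ^ 2 := by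
    intro v
    have := T.le_opNorm v
    rw [hc_def]
    nlinarith [norm_nonneg (T v), norm_nonneg v, norm_nonneg T]
  have hTv_lb : ∀ v : E, δ * c * ‖v‖ ^ 2 ≤ ‖T v‖ ^ 2 := by
    intro v
    have h1 : ‖v‖ ≤ m * ‖T v‖ := by
      have h2 : Ti (T v) = v := by
        have := congrArg (fun f : E →L[ℝ] E => f v) hUT
        simpa [mul_apply] using this
      calc ‖v‖ = ‖Ti (T v)‖ := by rw [h2]
        _ ≤ m * ‖T v‖ := Ti.le_opNorm (T v)
    have h3 : ‖v‖ ^ 2 ≤ m ^ 2 * ‖T v‖ ^ 2 := by nlinarith [norm_nonneg v, norm_nonneg (T v)]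
    have h4 : δ * c * ‖v‖ ^ 2 ≤ δ * c * (m ^ 2 * ‖T v‖ ^ 2) := by
      apply mul_le_mul_of_nonneg_left h3; positivity
    have h5 : δ * c * (m ^ 2 * ‖T v‖ ^ 2) = (δ * (m ^ 2 * c)) * ‖T v‖ ^ 2 := by ring
    have h6 : δ * (m ^ 2 * c) = 1 := by
      rw [hδ_def]; field_simp
    rw [h5, h6, one_mul] at h4
    exact h4
  -- S₀ and its norm bound
  set S₀ : E →L[ℝ] E := 1 - c⁻¹ • A with hS₀_def
  have hS₀sa : IsSelfAdjoint S₀ := by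
    rw [hS₀_def]
    rw [IsSelfAdjoint, star_sub, star_one, star_smul, star_trivial, hAsa.star_eq]
  have hS₀quad : ∀ v : E, |⟪S₀ v, v⟫_ℝ| ≤ q * ‖v‖ ^ 2 := by
    intro v
    have h1 : ⟪S₀ v, v⟫_ℝ = ‖v‖ ^ 2 - c⁻¹ * ‖T v‖ ^ 2 := by
      rw [hS₀_def]
      simp only [sub_apply, one_apply, coe_smul', Pi.smul_apply, inner_sub_left,
        inner_smul_left, real_inner_self_eq_norm_sq, RCLike.star_def]
      rw [hAquad v]
      norm_num
    rw [h1, abs_le]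
    constructor
    · have := hTv_ub v
      have h2 : c⁻¹ * ‖T v‖ ^ 2 ≤ ‖v‖ ^ 2 := by
        rw [inv_mul_le_iff₀ hc]
        linarith [hTv_ub v]
      nlinarith [sq_nonneg ‖v‖, hq0]
    · have h3 : δ * ‖v‖ ^ 2 ≤ c⁻¹ * ‖T v‖ ^ 2 := by
        have := hTv_lb v
        rw [show c⁻¹ * ‖T v‖ ^ 2 = ‖T v‖ ^ 2 / c from by ring, le_div_iff₀ hc]
        calc δ * ‖v‖ ^ 2 * c = δ * c * ‖v‖ ^ 2 := by ring
          _ ≤ ‖T v‖ ^ 2 := hTv_lb v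
      rw [hq_def]
      nlinarith [sq_nonneg ‖v‖]
  have hS₀norm : ‖S₀‖ ≤ q := sa_norm_le hS₀sa hq0 hS₀quad
  -- the radius r
  set r : ℝ := 1 - Real.sqrt δ with hr_def
  have hsq : Real.sqrt δ ^ 2 = δ := Real.sq_sqrt hδ0.le
  have hsq0 : 0 < Real.sqrt δ := Real.sqrt_pos.mpr hδ0
  have hsq1 : Real.sqrt δ ≤ 1 := by
    calc Real.sqrt δ ≤ Real.sqrt 1 := Real.sqrt_le_sqrt hδ1
      _ = 1 := Real.sqrt_one
  have hr0 : 0 ≤ r := by rw [hr_def]; linarith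
  have hr1 : r < 1 := by rw [hr_def]; linarith
  have hqr : q + r * r = 2 * r := by
    rw [hq_def, hr_def]; nlinarith [hsq]
  -- the complete space of candidates
  set s : Set (E →L[ℝ] E) := {X | ‖X‖ ≤ r ∧ IsSelfAdjoint X} with hs_def
  have hs_closed : IsClosed s :=
    (isClosed_le continuous_norm continuous_const).inter
      (isClosed_eq continuous_star continuous_id)
  haveI : CompleteSpace s := hs_closed.completeSpace_coe
  haveI : Nonempty s := ⟨⟨0, by simpa using hr0, by simp [IsSelfAdjoint]⟩⟩
  -- the contraction
  have hΦmem : ∀ X : s, ((2⁻¹ : ℝ) • (S₀ + (X : E →L[ℝ] E) * (X : E →L[ℝ] E))) ∈ s := by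
    rintro ⟨X, hXr, hXsa⟩
    constructor
    · have h1 : ‖S₀ + X * X‖ ≤ q + r * r := by
        calc ‖S₀ + X * X‖ ≤ ‖S₀‖ + ‖X * X‖ := norm_add_le _ _
          _ ≤ q + ‖X‖ * ‖X‖ := by
              gcongr
              exact norm_mul_le X X
          _ ≤ q + r * r := by nlinarith [norm_nonneg X]
      calc ‖(2⁻¹ : ℝ) • (S₀ + X * X)‖ = 2⁻¹ * ‖S₀ + X * X‖ := by
            rw [norm_smul (2⁻¹ : ℝ) (S₀ + X * X)]; norm_num
        _ ≤ 2⁻¹ * (q + r * r) := by linarith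
        _ = r := by rw [hqr]; ring
    · show star _ = _
      rw [star_smul, star_trivial, star_add, hS₀sa.star_eq, star_mul, hXsa.star_eq]
  set Φ : s → s := fun X => ⟨(2⁻¹ : ℝ) • (S₀ + (X : E →L[ℝ] E) * (X : E →L[ℝ] E)), hΦmem X⟩
    with hΦ_def
  have hΦlip : ∀ X Y : s, dist (Φ X) (Φ Y) ≤ r * dist X Y := by
    rintro ⟨X, hXr, hXsa⟩ ⟨Y, hYr, hYsa⟩
    rw [Subtype.dist_eq, Subtype.dist_eq]
    show dist ((2⁻¹ : ℝ) • (S₀ + X * X)) ((2⁻¹ : ℝ) • (S₀ + Y * Y)) ≤ r * dist X Y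
    rw [dist_eq_norm, dist_eq_norm]
    have h1 : (2⁻¹ : ℝ) • (S₀ + X * X) - (2⁻¹ : ℝ) • (S₀ + Y * Y)
        = (2⁻¹ : ℝ) • (X * (X - Y) + (X - Y) * Y) := by
      rw [← smul_sub]
      congr 1
      noncomm_ring
    rw [h1, norm_smul (2⁻¹ : ℝ) (X * (X - Y) + (X - Y) * Y)]
    have h2 : ‖X * (X - Y) + (X - Y) * Y‖ ≤ r * ‖X - Y‖ + ‖X - Y‖ * r := by
      calc ‖X * (X - Y) + (X - Y) * Y‖ ≤ ‖X * (X - Y)‖ + ‖(X - Y) * Y‖ := norm_add_le _ _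
        _ ≤ ‖X‖ * ‖X - Y‖ + ‖X - Y‖ * ‖Y‖ := add_le_add (norm_mul_le _ _) (norm_mul_le _ _)
        _ ≤ r * ‖X - Y‖ + ‖X - Y‖ * r := by
            have := norm_nonneg (X - Y)
            nlinarith [norm_nonneg X, norm_nonneg Y]
    have h3 : ‖(2⁻¹ : ℝ)‖ = 2⁻¹ := by norm_num
    rw [h3]
    calc 2⁻¹ * ‖X * (X - Y) + (X - Y) * Y‖ ≤ 2⁻¹ * (r * ‖X - Y‖ + ‖X - Y‖ * r) :=
            mul_le_mul_of_nonneg_left h2 (by norm_num)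
      _ = r * ‖X - Y‖ := by ring
  have hΦ : ContractingWith ⟨r, hr0⟩ Φ := by
    constructor
    · exact_mod_cast hr1
    · exact LipschitzWith.of_dist_le_mul fun X Y => hΦlip X Y
  -- the fixed point x, and the square root P of A
  set x₀ : s := ContractingWith.fixedPoint Φ hΦ with hx₀_def
  set x : E →L[ℝ] E := (x₀ : E →L[ℝ] E) with hx_def
  have hxr : ‖x‖ ≤ r := x₀.2.1
  have hxsa : IsSelfAdjoint x := x₀.2.2
  have hfix : (2⁻¹ : ℝ) • (S₀ + x * x) = x :=
    congrArg Subtype.val hΦ.fixedPoint_isFixedPt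
  have h2x : S₀ + x * x = x + x := by
    calc S₀ + x * x = (2 : ℝ) • ((2⁻¹ : ℝ) • (S₀ + x * x)) := by
          rw [smul_smul]; norm_num
      _ = (2 : ℝ) • x := by rw [hfix]
      _ = x + x := two_smul ℝ x
  have h1x : (1 - x) * (1 - x) = c⁻¹ • A := by
    calc (1 - x) * (1 - x) = 1 - (x + x) + x * x := by noncomm_ring
      _ = 1 - (S₀ + x * x) + x * x := by rw [h2x]
      _ = 1 - S₀ := by abel
      _ = c⁻¹ • A := by rw [hS₀_def]; abel
  set P : E →L[ℝ] E := Real.sqrt c • (1 - x) with hP_def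
  have hsc : 0 < Real.sqrt c := Real.sqrt_pos.mpr hc
  have hP2 : P * P = A := by
    rw [hP_def, smul_mul_assoc, mul_smul_comm, smul_smul, Real.mul_self_sqrt hc.le, h1x,
      smul_smul, mul_inv_cancel₀ hc.ne', one_smul]
  have hPsa : IsSelfAdjoint P := by
    rw [hP_def, IsSelfAdjoint, star_smul, star_trivial, star_sub, star_one, hxsa.star_eq]
  have hPquad : ∀ v : E, Real.sqrt c * (1 - r) * ‖v‖ ^ 2 ≤ ⟪P v, v⟫_ℝ := by
    intro v
    have h1 : ⟪P v, v⟫_ℝ = Real.sqrt c * (‖v‖ ^ 2 - ⟪x v, v⟫_ℝ) := by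
      rw [hP_def]
      simp only [coe_smul', Pi.smul_apply, sub_apply, ContinuousLinearMap.one_apply]
      rw [real_inner_smul_left, inner_sub_left, real_inner_self_eq_norm_sq]
    have h2 : ⟪x v, v⟫_ℝ ≤ r * ‖v‖ ^ 2 := by
      calc ⟪x v, v⟫_ℝ ≤ ‖x v‖ * ‖v‖ := real_inner_le_norm _ _
        _ ≤ (‖x‖ * ‖v‖) * ‖v‖ := by
            have := x.le_opNorm v
            nlinarith [norm_nonneg v]
        _ ≤ r * ‖v‖ ^ 2 := by nlinarith [norm_nonneg v, sq_nonneg ‖v‖]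
    rw [h1]
    nlinarith [sq_nonneg ‖v‖]
  have hr1' : 0 < 1 - r := by linarith
  have hPunit : IsUnit P := by
    apply isUnit_of_forall_le_norm_inner_map P
      (c := ⟨Real.sqrt c * (1 - r), by positivity⟩) (by exact_mod_cast (by positivity : (0:ℝ) < Real.sqrt c * (1 - r)))
    intro v
    have := hPquad v
    rw [Real.norm_eq_abs]
    calc ‖v‖ ^ 2 * (⟨Real.sqrt c * (1 - r), by positivity⟩ : ℝ≥0)
        = Real.sqrt c * (1 - r) * ‖v‖ ^ 2 := by push_cast; ring
      _ ≤ ⟪P v, v⟫_ℝ := hPquad v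
      _ ≤ |⟪P v, v⟫_ℝ| := le_abs_self _
  have hP1unit : IsUnit (P + 1) := by
    apply isUnit_of_forall_le_norm_inner_map (P + 1) (c := 1) one_pos
    intro v
    have h1 : ⟪(P + 1) v, v⟫_ℝ = ⟪P v, v⟫_ℝ + ‖v‖ ^ 2 := by
      simp only [add_apply, ContinuousLinearMap.one_apply, inner_add_left, real_inner_self_eq_norm_sq]
    rw [Real.norm_eq_abs]
    have h2 := hPquad v
    have h3 : ‖v‖ ^ 2 ≤ ⟪(P + 1) v, v⟫_ℝ := by
      rw [h1]
      nlinarith [sq_nonneg ‖v‖, mul_nonneg (mul_nonneg hsc.le hr1'.le) (sq_nonneg ‖v‖)]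
    calc ‖v‖ ^ 2 * ((1 : ℝ≥0) : ℝ) = ‖v‖ ^ 2 := by norm_num
      _ ≤ ⟪(P + 1) v, v⟫_ℝ := h3
      _ ≤ |⟪(P + 1) v, v⟫_ℝ| := le_abs_self _
  obtain ⟨Up, hUp⟩ := hPunit
  set Q : E →L[ℝ] E := ↑Up⁻¹ with hQ_def
  have hQP : Q * P = 1 := by rw [hQ_def, ← hUp]; exact Up.inv_mul
  have hPQ : P * Q = 1 := by rw [hQ_def, ← hUp]; exact Up.mul_inv
  have hQstar : star Q = Q := by
    have h1 : star Q * P = 1 := by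
      calc star Q * P = star Q * star P := by rw [hPsa.star_eq]
        _ = star (P * Q) := (star_mul P Q).symm
        _ = 1 := by rw [hPQ, star_one]
    calc star Q = star Q * (P * Q) := by rw [hPQ, mul_one]
      _ = (star Q * P) * Q := by rw [mul_assoc]
      _ = Q := by rw [h1, one_mul]
  -- K and its properties
  set K : E →L[ℝ] E := P - 1 with hK_def
  have hKsa : IsSelfAdjoint K := by
    rw [hK_def, IsSelfAdjoint, star_sub, star_one, hPsa.star_eq]
  have h1K : (1 : E →L[ℝ] E) + K = P := by rw [hK_def]; abel
  have hKu : IsUnit (1 + K) := by rw [h1K]; exact ⟨Up, hUp⟩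
  have hKc : IsCompactOperator ⇑K := by
    obtain ⟨V, hV⟩ := hP1unit
    have hVinv : (↑V⁻¹ : E →L[ℝ] E) * (P + 1) = 1 := by rw [← hV]; exact V.inv_mul
    have hPP1 : (P + 1) * (P - 1) = A - 1 := by
      have h : (P + 1) * (P - 1) = P * P - 1 := by noncomm_ring
      rw [h, hP2]
    have hfactK : (↑V⁻¹ : E →L[ℝ] E) * (A - 1) = K := by
      rw [← hPP1, ← mul_assoc, hVinv, one_mul, hK_def]
    rw [← hfactK]
    have : IsCompactOperator (⇑(↑V⁻¹ : E →L[ℝ] E) ∘ ⇑(A - 1)) := hAc.clm_comp _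
    simpa [Function.comp, mul_apply] using this
  -- W and its properties
  set W : E →L[ℝ] E := T * Q with hW_def
  have hadjW : adjoint W = Q * adjoint T := by
    rw [hW_def, ← star_eq_adjoint, star_mul, hQstar, star_eq_adjoint]
  have hW1 : adjoint W * W = 1 := by
    calc adjoint W * W = (Q * adjoint T) * (T * Q) := by rw [hadjW, hW_def]
      _ = Q * ((adjoint T * T) * Q) := by noncomm_ring
      _ = Q * ((P * P) * Q) := by rw [← hA_def, ← hP2]
      _ = (Q * P) * (P * Q) := by noncomm_ring
      _ = 1 := by rw [hQP, hPQ, mul_one]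
  have hWu : IsUnit W := by
    rw [hW_def]
    exact ⟨U * Up⁻¹, by rw [Units.val_mul, hU, hQ_def]⟩
  have hW2 : W * adjoint W = 1 := by
    obtain ⟨Z, hZ⟩ := hWu
    have hZi : W * ↑Z⁻¹ = 1 := by rw [← hZ]; exact Z.mul_inv
    calc W * adjoint W = W * adjoint W * (W * ↑Z⁻¹) := by rw [hZi, mul_one]
      _ = W * ((adjoint W * W) * ↑Z⁻¹) := by noncomm_ring
      _ = W * ↑Z⁻¹ := by rw [hW1, one_mul]
      _ = 1 := hZi
  refine ⟨W, K, ⟨hW1, hW2⟩, hKsa, hKc, hKu, ?_⟩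
  rw [h1K, hW_def, mul_assoc, hQP, mul_one]


end Aux

/-- Polar-type decomposition characterizing invertible `T` with `T T* − Id` compact:
`T` is invertible with `T T* − Id` compact iff `T = W (Id + K)` for some orthogonal `W` and
self-adjoint compact `K` with `Id + K` invertible. -/
theorem stmt3 {E : Type*} [NormedAddCommGroup E] [InnerProductSpace ℝ E] [CompleteSpace E]
    [TopologicalSpace.SeparableSpace E] (T : E →L[ℝ] E) :
    (IsUnit T ∧ IsCompactOperator ⇑(T * adjoint T - 1)) ↔
      ∃ W K : E →L[ℝ] E,
        (adjoint W * W = 1 ∧ W * adjoint W = 1) ∧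
        IsSelfAdjoint K ∧ IsCompactOperator ⇑K ∧ IsUnit (1 + K) ∧ T = W * (1 + K) := by
  constructor
  · rintro ⟨hT, hTc⟩
    rcases subsingleton_or_nontrivial E with hE | hE
    · haveI : Subsingleton (E →L[ℝ] E) :=
        ⟨fun f g => ContinuousLinearMap.ext fun v => Subsingleton.elim _ _⟩
      refine ⟨1, 0, ⟨Subsingleton.elim _ _, Subsingleton.elim _ _⟩, by simp [IsSelfAdjoint], ?_,
        by simpa using isUnit_one, Subsingleton.elim _ _⟩
      have h0 : ⇑(0 : E →L[ℝ] E) = (0 : E → E) := rfl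
      rw [h0]
      exact isCompactOperator_zero
    · exact stmt3_forward T hT hTc
  · intro h
    obtain ⟨W, K, ⟨hW1, hW2⟩, hKsa, hKc, hKu, rfl⟩ := h
    have hWu : IsUnit W := ⟨⟨W, adjoint W, hW2, hW1⟩, rfl⟩
    refine ⟨hWu.mul hKu, ?_⟩
    set a : E →L[ℝ] E := K + K + K * K with ha_def
    have hadj : adjoint (W * (1 + K)) = (1 + K) * adjoint W := by
      rw [← star_eq_adjoint, star_mul, star_add, star_one, hKsa.star_eq, ← star_eq_adjoint]
    have hkey : W * (1 + K) * adjoint (W * (1 + K)) - 1 = W * a * adjoint W := by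
      rw [hadj]
      have h1 : W * (1 + K) * ((1 + K) * adjoint W) = W * a * adjoint W + W * adjoint W := by
        rw [ha_def]; noncomm_ring
      rw [h1, hW2, add_sub_cancel_right]
    rw [hkey]
    have haC : IsCompactOperator ⇑a := by
      have hKK : IsCompactOperator ⇑(K * K) := by
        have := hKc.comp_clm K
        simpa [Function.comp] using this
      exact (hKc.add hKc).add hKK
    have : IsCompactOperator (⇑W ∘ ⇑a ∘ ⇑(adjoint W)) :=
      ((haC.comp_clm (adjoint W)).clm_comp W)
    simpa [Function.comp_def] using this
end

section
/- Let E be a separable Hilbert space and T ∈ 𝓛(E). Then T is invertible on E with T T* − Id_E Hilbert–Schmidt on E if and only if there exist an orthogonal (unitary) operator U on E and a self-adjoint Hilbert–Schmidt operator S on E such that Id_E + S is invertible and T = U (Id_E + S). -/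
set_option maxHeartbeats 1600000
set_option synthInstance.maxHeartbeats 400000

open ContinuousLinearMap RealInnerProductSpace

section Coefficients

open Polynomial

/-- Recursion for generalized binomial coefficients over `ℝ`. -/
lemma ring_choose_succ (r : ℝ) (n : ℕ) :
    Ring.choose r (n + 1) = Ring.choose r n * (r - n) / (n + 1) := by
  have h1 := Ring.descPochhammer_eq_factorial_smul_choose r (n + 1)
  have h2 := Ring.descPochhammer_eq_factorial_smul_choose r n
  have h3 : descPochhammer ℤ (n + 1) = descPochhammer ℤ n * (X - (n : ℤ[X])) :=
    descPochhammer_succ_right ℤ n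
  have h4 : (descPochhammer ℤ (n+1)).smeval r = (descPochhammer ℤ n).smeval r * (r - n) := by
    rw [h3]
    rw [Polynomial.smeval_mul]
    congr 1
    simp [Polynomial.smeval_sub, Polynomial.smeval_X, Polynomial.smeval_natCast]
  rw [h1, h2] at h4
  have hfac : ((n+1).factorial : ℝ) ≠ 0 := Nat.cast_ne_zero.2 (n+1).factorial_ne_zero
  have hkey : ((n+1).factorial : ℝ) * Ring.choose r (n + 1) =
      (n.factorial : ℝ) * Ring.choose r n * (r - n) := by
    simpa [nsmul_eq_mul] using h4
  rw [Nat.factorial_succ] at hkey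
  push_cast at hkey
  have hn1 : ((n:ℝ) + 1) ≠ 0 := by positivity
  rw [eq_div_iff hn1]
  have hf : (n.factorial : ℝ) ≠ 0 := Nat.cast_ne_zero.2 n.factorial_ne_zero
  apply mul_left_cancel₀ hf
  linear_combination hkey

/-- The coefficients of the power series of `√(1-x)`. -/
noncomputable def gc : ℕ → ℝ := fun n => (-1)^n * Ring.choose (1/2 : ℝ) n

/-- Normalized central binomial sequence, controlling the partial sums of `|gc|`. -/
noncomputable def dd : ℕ → ℝ
  | 0 => 1
  | n+1 => dd n * (2*n+1)/(2*n+2)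

lemma gc_zero : gc 0 = 1 := by simp [gc, Ring.choose_zero_right]

lemma gc_succ (n : ℕ) : gc (n+1) = gc n * (2*n-1)/(2*n+2) := by
  simp only [gc, ring_choose_succ, pow_succ]
  field_simp
  ring

lemma dd_pos (n : ℕ) : 0 < dd n := by
  induction n with
  | zero => norm_num [dd]
  | succ n ih =>
    rw [dd]
    have h1 : (0:ℝ) < 2*n+1 := by positivity
    have h2 : (0:ℝ) < 2*n+2 := by positivity
    positivity

lemma gc_eq_dd (n : ℕ) : gc (n+1) = -dd n / (2*n+2) := by
  induction n with
  | zero => rw [gc_succ, gc_zero]; norm_num [dd]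
  | succ n ih =>
    rw [gc_succ, ih, dd]
    push_cast
    rw [div_eq_div_iff (by positivity) (by positivity)]
    ring

lemma gc_succ_nonpos (n : ℕ) : gc (n+1) ≤ 0 := by
  rw [gc_eq_dd]
  have := dd_pos n
  have h2 : (0:ℝ) < 2*n+2 := by positivity
  apply div_nonpos_of_nonpos_of_nonneg <;> linarith

lemma gc_partial_sum (n : ℕ) : ∑ k ∈ Finset.range n, (-gc (k+1)) = 1 - dd n := by
  induction n with
  | zero => simp [dd]
  | succ n ih =>
    rw [Finset.sum_range_succ, ih, gc_eq_dd, dd]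
    have h2 : (2*(n:ℝ)+2) ≠ 0 := by positivity
    field_simp
    ring

lemma gc_abs_partial (n : ℕ) : ∑ k ∈ Finset.range n, |gc (k+1)| ≤ 1 := by
  have h1 : ∀ k, |gc (k+1)| = -gc (k+1) := fun k => abs_of_nonpos (gc_succ_nonpos k)
  rw [Finset.sum_congr rfl fun k _ => h1 k, gc_partial_sum]
  have := dd_pos n
  linarith

lemma gc_tail_summable : Summable fun n => |gc (n+1)| :=
  summable_of_sum_range_le (fun n => abs_nonneg _) gc_abs_partial

lemma gc_abs_summable : Summable fun n => |gc n| :=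
  (summable_nat_add_iff 1).1 gc_tail_summable

lemma gc_tail_tsum_le : ∑' n, |gc (n+1)| ≤ 1 :=
  Summable.tsum_le_of_sum_range_le gc_tail_summable gc_abs_partial

/-- Chu–Vandermonde: the convolution square of `gc` is the power series of `1 - x`. -/
lemma gc_conv (n : ℕ) : ∑ ij ∈ Finset.HasAntidiagonal.antidiagonal n, gc ij.1 * gc ij.2 =
    if n = 0 then 1 else if n = 1 then -1 else 0 := by
  have h1 : ∀ ij ∈ Finset.HasAntidiagonal.antidiagonal n, gc ij.1 * gc ij.2 =
      (-1)^n * (Ring.choose (1/2:ℝ) ij.1 * Ring.choose (1/2:ℝ) ij.2) := by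
    intro ij hij
    have := Finset.HasAntidiagonal.mem_antidiagonal.1 hij
    simp only [gc]
    rw [← this, pow_add]
    ring
  rw [Finset.sum_congr rfl h1, ← Finset.mul_sum, ← Ring.add_choose_eq n (Commute.all _ _)]
  have h2 : (1/2 : ℝ) + 1/2 = ((1:ℕ):ℝ) := by norm_num
  rw [h2, Ring.choose_natCast]
  match n with
  | 0 => norm_num
  | 1 => norm_num
  | (n+2) => simp [Nat.choose_eq_zero_of_lt (by omega : 1 < n + 2)]

end Coefficients

section HS

variable {E : Type*} [NormedAddCommGroup E] [InnerProductSpace ℝ E] [CompleteSpace E]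

omit [CompleteSpace E] in
lemma parseval (b : HilbertBasis ℕ ℝ E) (x : E) :
    HasSum (fun j => ⟪x, b j⟫ ^ 2) (‖x‖ ^ 2) := by
  have h := b.hasSum_inner_mul_inner x x
  simp only [← real_inner_self_eq_norm_sq]
  convert h using 2 with j
  · rfl
  rw [real_inner_comm (b j) x, sq]

lemma hs_comp_left {A : E →L[ℝ] E} (B : E →L[ℝ] E) (hA : IsHilbertSchmidt A) :
    IsHilbertSchmidt (B * A) := by
  obtain ⟨b, hb⟩ := hA
  refine ⟨b, Summable.of_nonneg_of_le (fun j => sq_nonneg _) (fun j => ?_)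
    (hb.mul_left (‖B‖ ^ 2))⟩
  have h1 : ‖(B * A) (b j)‖ ≤ ‖B‖ * ‖A (b j)‖ := B.le_opNorm _
  calc ‖(B * A) (b j)‖ ^ 2 ≤ (‖B‖ * ‖A (b j)‖) ^ 2 := by
        apply pow_le_pow_left₀ (norm_nonneg _) h1
    _ = ‖B‖ ^ 2 * ‖A (b j)‖ ^ 2 := mul_pow _ _ _

lemma hs_adjoint {A : E →L[ℝ] E} (hA : IsHilbertSchmidt A) : IsHilbertSchmidt (adjoint A) := by
  obtain ⟨b, hb⟩ := hA
  have hf : Summable fun p : ℕ × ℕ => ⟪A (b p.1), b p.2⟫ ^ 2 := by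
    refine (summable_prod_of_nonneg (fun p => sq_nonneg _)).2
      ⟨fun k => (parseval b (A (b k))).summable, ?_⟩
    exact hb.congr fun k => ((parseval b (A (b k))).tsum_eq).symm
  have hswap : Summable fun p : ℕ × ℕ => ⟪A (b p.2), b p.1⟫ ^ 2 :=
    ((Equiv.prodComm ℕ ℕ).summable_iff).2 hf
  have h2 := ((summable_prod_of_nonneg (f := fun p : ℕ × ℕ => ⟪A (b p.2), b p.1⟫ ^ 2)
      (fun p => sq_nonneg _)).1 hswap).2
  refine ⟨b, h2.congr fun j => ?_⟩
  have h3 : ∀ k, ⟪adjoint A (b j), b k⟫ ^ 2 = ⟪A (b k), b j⟫ ^ 2 := fun k => by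
    rw [ContinuousLinearMap.adjoint_inner_left, real_inner_comm]
  calc (∑' k, ⟪A (b k), b j⟫ ^ 2) = ∑' k, ⟪adjoint A (b j), b k⟫ ^ 2 :=
        tsum_congr fun k => (h3 k).symm
    _ = ‖adjoint A (b j)‖ ^ 2 := (parseval b _).tsum_eq

lemma hs_comp_right {A : E →L[ℝ] E} (B : E →L[ℝ] E) (hA : IsHilbertSchmidt A) :
    IsHilbertSchmidt (A * B) := by
  have h2 := hs_adjoint (hs_comp_left (adjoint B) (hs_adjoint hA))
  have h3 : adjoint (adjoint B * adjoint A) = A * B := by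
    simp only [← star_eq_adjoint, star_mul, star_star]
  rwa [h3] at h2

omit [CompleteSpace E] in
lemma norm_le_of_selfAdjoint {X : E →L[ℝ] E} (hX : ∀ x y : E, ⟪X y, x⟫ = ⟪X x, y⟫) {c : ℝ}
    (hc : 0 ≤ c) (h : ∀ x, |⟪X x, x⟫| ≤ c * ‖x‖ ^ 2) : ‖X‖ ≤ c := by
  have key : ∀ x y : E, ⟪X x, y⟫ ≤ c / 2 * (‖x‖ ^ 2 + ‖y‖ ^ 2) := by
    intro x y
    have e1 : ⟪X (x + y), x + y⟫ - ⟪X (x - y), x - y⟫ = 4 * ⟪X x, y⟫ := by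
      simp only [map_add, map_sub, inner_add_left, inner_add_right, inner_sub_left,
        inner_sub_right]
      rw [hX y x]
      ring
    have e2 : ⟪X (x + y), x + y⟫ ≤ c * ‖x + y‖ ^ 2 := (abs_le.1 (h _)).2
    have e3 : -(c * ‖x - y‖ ^ 2) ≤ ⟪X (x - y), x - y⟫ := (abs_le.1 (h _)).1
    have e4 : 4 * ⟪X x, y⟫ ≤ c * ‖x + y‖ ^ 2 + c * ‖x - y‖ ^ 2 := by
      rw [← e1]; linarith
    have e5 : ‖x + y‖ ^ 2 + ‖x - y‖ ^ 2 = 2 * (‖x‖ ^ 2 + ‖y‖ ^ 2) := by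
      rw [norm_add_sq_real, norm_sub_sq_real]; ring
    nlinarith [e4, e5]
  refine ContinuousLinearMap.opNorm_le_bound X hc fun x => ?_
  rcases eq_or_ne (X x) 0 with hx0 | hx0
  · simp [hx0]; positivity
  have hxn : (0:ℝ) < ‖X x‖ := norm_pos_iff.2 hx0
  rcases eq_or_ne x 0 with h0 | h0
  · exact absurd (by rw [h0, map_zero]) hx0
  have hxpos : (0:ℝ) < ‖x‖ := norm_pos_iff.2 h0
  have hkey := key x ((‖x‖ / ‖X x‖) • X x)
  rw [real_inner_smul_right, real_inner_self_eq_norm_sq] at hkey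
  have hn : ‖(‖x‖ / ‖X x‖) • X x‖ ^ 2 = ‖x‖ ^ 2 := by
    rw [norm_smul, Real.norm_eq_abs, abs_of_pos (by positivity)]
    field_simp
  rw [hn] at hkey
  have h7 : ‖x‖ / ‖X x‖ * ‖X x‖ ^ 2 = ‖x‖ * ‖X x‖ := by field_simp
  rw [h7] at hkey
  have h8 : ‖x‖ * ‖X x‖ ≤ c * ‖x‖ ^ 2 := by nlinarith
  calc ‖X x‖ = ‖x‖ * ‖X x‖ / ‖x‖ := by field_simp
    _ ≤ c * ‖x‖ ^ 2 / ‖x‖ := by gcongr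
    _ = c * ‖x‖ := by field_simp

lemma isUnit_of_coercive {L : E →L[ℝ] E} (h : ∀ x, ‖x‖^2 ≤ ⟪L x, x⟫) : IsUnit L := by
  have hco : IsCoercive ((innerSL ℝ).comp L) := by
    refine ⟨1, one_pos, fun u => ?_⟩
    have h1 := h u
    have h2 : ((innerSL ℝ).comp L) u u = ⟪L u, u⟫ := rfl
    rw [h2, one_mul]
    nlinarith [h1]
  set e := hco.continuousLinearEquivOfBilin with he_def
  have he : ∀ v, (e : E →L[ℝ] E) v = L v := by
    intro v
    apply ext_inner_right ℝ
    intro w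
    exact hco.continuousLinearEquivOfBilin_apply v w
  refine isUnit_iff_exists.2 ⟨(e.symm : E →L[ℝ] E), ?_, ?_⟩
  · ext x
    have := he (e.symm x)
    simp only [ContinuousLinearMap.mul_apply, ContinuousLinearMap.one_apply,
      ContinuousLinearEquiv.coe_coe] at this ⊢
    rw [← this, e.apply_symm_apply]
  · ext x
    have := he x
    simp only [ContinuousLinearMap.mul_apply, ContinuousLinearMap.one_apply,
      ContinuousLinearEquiv.coe_coe] at this ⊢
    rw [← this, e.symm_apply_apply]

variable {X : E →L[ℝ] E}

omit [CompleteSpace E] in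
lemma pow_norm_le_one (hX : ‖X‖ ≤ 1) (n : ℕ) : ‖X ^ n‖ ≤ 1 := by
  cases n with
  | zero => simpa [ContinuousLinearMap.one_def] using ContinuousLinearMap.norm_id_le (E := E)
  | succ n =>
    calc ‖X ^ (n+1)‖ ≤ ‖X‖ ^ (n+1) := norm_pow_le' X n.succ_pos
      _ ≤ 1 := pow_le_one₀ (norm_nonneg _) hX

omit [CompleteSpace E] in
lemma F_norm_le (hX : ‖X‖ ≤ 1) (n : ℕ) : ‖gc n • X ^ n‖ ≤ |gc n| := by
  refine (norm_smul_le (gc n) (X ^ n)).trans ?_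
  rw [Real.norm_eq_abs]
  calc |gc n| * ‖X ^ n‖ ≤ |gc n| * 1 :=
        mul_le_mul_of_nonneg_left (pow_norm_le_one hX n) (abs_nonneg _)
    _ = |gc n| := mul_one _

omit [CompleteSpace E] in
lemma F_norm_summable (hX : ‖X‖ ≤ 1) : Summable fun n => ‖gc n • X ^ n‖ :=
  Summable.of_nonneg_of_le (fun n => norm_nonneg _) (F_norm_le hX) gc_abs_summable

lemma F_summable (hX : ‖X‖ ≤ 1) : Summable fun n => gc n • X ^ n :=
  (F_norm_summable hX).of_norm

/-- The square root of `1 - X`, defined by the binomial power series. -/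
noncomputable def sqrtOneSub (X : E →L[ℝ] E) : E →L[ℝ] E := ∑' n, gc n • X ^ n

lemma sqrtOneSub_sq (hX : ‖X‖ ≤ 1) : sqrtOneSub X * sqrtOneSub X = 1 - X := by
  rw [sqrtOneSub,
    tsum_mul_tsum_eq_tsum_sum_antidiagonal_of_summable_norm (F_norm_summable hX)
      (F_norm_summable hX)]
  have h1 : ∀ n, ∑ kl ∈ Finset.HasAntidiagonal.antidiagonal n, (gc kl.1 • X ^ kl.1) * (gc kl.2 • X ^ kl.2)
      = (if n = 0 then (1:ℝ) else if n = 1 then -1 else 0) • X ^ n := by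
    intro n
    rw [← gc_conv n, Finset.sum_smul]
    refine Finset.sum_congr rfl fun kl hkl => ?_
    have hn := Finset.HasAntidiagonal.mem_antidiagonal.1 hkl
    rw [smul_mul_assoc, mul_smul_comm, smul_smul, ← pow_add, hn]
  rw [tsum_congr h1]
  rw [tsum_eq_sum (s := Finset.range 2) (fun n hn => by
    rw [Finset.mem_range] at hn
    have h0 : n ≠ 0 := by omega
    have h1 : n ≠ 1 := by omega
    simp [h0, h1])]
  rw [Finset.sum_range_succ, Finset.sum_range_one]
  norm_num
  abel

lemma sqrtOneSub_selfAdjoint (hX : ‖X‖ ≤ 1) (hXsa : IsSelfAdjoint X) :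
    IsSelfAdjoint (sqrtOneSub X) := by
  have h1 : HasSum (fun n => star (gc n • X ^ n)) (star (sqrtOneSub X)) :=
    (F_summable hX).hasSum.star
  have h2 : ∀ n, star (gc n • X ^ n) = gc n • X ^ n := fun n => by
    rw [star_smul, star_pow, hXsa.star_eq, star_trivial]
  simp only [h2] at h1
  show star (sqrtOneSub X) = sqrtOneSub X
  exact h1.tsum_eq.symm

lemma sqrtOneSub_inner_nonneg (hX : ‖X‖ ≤ 1) (x : E) : 0 ≤ ⟪x, sqrtOneSub X x⟫ := by
  have h1 : HasSum (fun n => (gc n • X ^ n) x) (sqrtOneSub X x) :=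
    ((F_summable hX).hasSum.mapL (ContinuousLinearMap.apply ℝ E x))
  have h2 : HasSum (fun n => ⟪x, (gc n • X ^ n) x⟫) ⟪x, sqrtOneSub X x⟫ :=
    h1.mapL (innerSL ℝ x)
  have h3 : ⟪x, sqrtOneSub X x⟫ = ⟪x, x⟫ + ∑' n, ⟪x, (gc (n+1) • X ^ (n+1)) x⟫ := by
    rw [← h2.tsum_eq, Summable.tsum_eq_zero_add h2.summable]
    congr 1
    simp [gc_zero]
  have h4 : ∀ n, |⟪x, (gc (n+1) • X ^ (n+1)) x⟫| ≤ |gc (n+1)| * ‖x‖ ^ 2 := by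
    intro n
    calc |⟪x, (gc (n+1) • X ^ (n+1)) x⟫| ≤ ‖x‖ * ‖(gc (n+1) • X ^ (n+1)) x‖ :=
          abs_real_inner_le_norm _ _
      _ ≤ ‖x‖ * (|gc (n+1)| * ‖x‖) := by
          refine mul_le_mul_of_nonneg_left ?_ (norm_nonneg _)
          calc ‖(gc (n+1) • X ^ (n+1)) x‖ ≤ ‖gc (n+1) • X ^ (n+1)‖ * ‖x‖ := le_opNorm _ _
            _ ≤ |gc (n+1)| * ‖x‖ :=
                mul_le_mul_of_nonneg_right (F_norm_le hX (n+1)) (norm_nonneg _)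
      _ = |gc (n+1)| * ‖x‖ ^ 2 := by ring
  have hs : Summable fun n => ⟪x, (gc (n+1) • X ^ (n+1)) x⟫ :=
    h2.summable.comp_injective (add_left_injective 1)
  have h5 : |∑' n, ⟪x, (gc (n+1) • X ^ (n+1)) x⟫| ≤ ‖x‖ ^ 2 := by
    calc |∑' n, ⟪x, (gc (n+1) • X ^ (n+1)) x⟫| ≤ ∑' n, |⟪x, (gc (n+1) • X ^ (n+1)) x⟫| := by
          rw [← Real.norm_eq_abs]
          refine (norm_tsum_le_tsum_norm (by simpa [Real.norm_eq_abs] using hs.abs)).trans ?_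
          simp [Real.norm_eq_abs]
      _ ≤ ∑' n, |gc (n+1)| * ‖x‖ ^ 2 := by
          refine Summable.tsum_le_tsum h4 (hs.abs) ?_
          exact (gc_abs_summable.comp_injective (add_left_injective 1)).mul_right _
      _ = (∑' n, |gc (n+1)|) * ‖x‖ ^ 2 := tsum_mul_right
      _ ≤ 1 * ‖x‖ ^ 2 := mul_le_mul_of_nonneg_right gc_tail_tsum_le (sq_nonneg _)
      _ = ‖x‖ ^ 2 := one_mul _
  rw [h3, real_inner_self_eq_norm_sq]
  have h6 := abs_le.1 h5
  linarith [h6.1]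

end HS

/-- Polar-type decomposition characterizing invertible `T` with `T T* − Id` Hilbert–Schmidt:
`T` is invertible with `T T* − Id` Hilbert–Schmidt iff `T = U (Id + S)` for some orthogonal `U`
and self-adjoint Hilbert–Schmidt `S` with `Id + S` invertible. -/
theorem stmt4 {E : Type*} [NormedAddCommGroup E] [InnerProductSpace ℝ E] [CompleteSpace E]
    [TopologicalSpace.SeparableSpace E] (T : E →L[ℝ] E) :
    (IsUnit T ∧ IsHilbertSchmidt (T * adjoint T - 1)) ↔
      ∃ U S : E →L[ℝ] E,
        (adjoint U * U = 1 ∧ U * adjoint U = 1) ∧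
        IsSelfAdjoint S ∧ IsHilbertSchmidt S ∧ IsUnit (1 + S) ∧ T = U * (1 + S) := by
  rcases subsingleton_or_nontrivial E with hE | hE
  · have hnb : ∀ _b : HilbertBasis ℕ ℝ E, False := fun b => by
      have h1 : ‖(b 0 : E)‖ = 1 := b.orthonormal.1 0
      rw [Subsingleton.elim (b 0 : E) 0, norm_zero] at h1
      exact zero_ne_one h1
    constructor
    · rintro ⟨-, ⟨b, -⟩⟩
      exact (hnb b).elim
    · rintro ⟨U, S, -, -, ⟨b, -⟩, -, -⟩
      exact (hnb b).elim
  constructor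
  · rintro ⟨hT, hK⟩
    obtain ⟨t, ht⟩ := hT
    set T' : E →L[ℝ] E := ↑t⁻¹ with hT'
    have hTT' : T * T' = 1 := by rw [← ht]; exact t.mul_inv
    have hT'T : T' * T = 1 := by rw [← ht]; exact t.inv_mul
    have hsT'T : star T' * star T = 1 := by rw [← star_mul, hTT', star_one]
    have hsTT' : star T * star T' = 1 := by rw [← star_mul, hT'T, star_one]
    set A : E →L[ℝ] E := adjoint T * T with hA
    have hAsa : IsSelfAdjoint A := by
      rw [isSelfAdjoint_iff, hA]
      simp only [star_mul, ← star_eq_adjoint, star_star]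
    set c : E →L[ℝ] E := T' * star T' with hc
    have hcA : c * A = 1 := by
      rw [hc, hA, ← star_eq_adjoint]
      calc T' * star T' * (star T * T) = T' * ((star T' * star T) * T) := by
            simp only [mul_assoc]
        _ = T' * T := by rw [hsT'T, one_mul]
        _ = 1 := hT'T
    have hAc : A * c = 1 := by
      rw [hc, hA, ← star_eq_adjoint]
      calc star T * T * (T' * star T') = star T * ((T * T') * star T') := by
            simp only [mul_assoc]
        _ = star T * star T' := by rw [hTT', one_mul]
        _ = 1 := hsTT'
    have hAunit : IsUnit A := isUnit_iff_exists.2 ⟨c, hAc, hcA⟩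
    have hAinner : ∀ x : E, ⟪A x, x⟫ = ‖T x‖ ^ 2 := by
      intro x
      rw [hA, ContinuousLinearMap.mul_apply, ContinuousLinearMap.adjoint_inner_left,
        real_inner_self_eq_norm_sq]
    have hApos : 0 < ‖A‖ := by
      rcases (norm_nonneg A).lt_or_eq with h | h
      · exact h
      · exfalso
        have hA0 : A = 0 := by rwa [eq_comm, norm_eq_zero] at h
        obtain ⟨x0, hx0⟩ := exists_ne (0 : E)
        have h1 : (1 : E →L[ℝ] E) = 0 := by rw [← hcA, hA0, mul_zero]
        have h2 : x0 = 0 := by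
          have h3 := congrArg (fun (f : E →L[ℝ] E) => f x0) h1
          simpa using h3
        exact hx0 h2
    set r : ℝ := ‖A‖ with hr
    set X : E →L[ℝ] E := 1 - r⁻¹ • A with hX
    have hXsa : IsSelfAdjoint X := by
      rw [hX]
      exact (IsSelfAdjoint.one (R := E →L[ℝ] E)).sub (IsSelfAdjoint.smul (star_trivial _) hAsa)
    have hXsymm : ∀ x y : E, ⟪X y, x⟫ = ⟪X x, y⟫ := by
      intro x y
      nth_rewrite 1 [← hXsa.star_eq]
      rw [star_eq_adjoint, ContinuousLinearMap.adjoint_inner_left, real_inner_comm]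
    have hXquad : ∀ x : E, |⟪X x, x⟫| ≤ 1 * ‖x‖ ^ 2 := by
      intro x
      have h1 : ⟪X x, x⟫ = ‖x‖^2 - r⁻¹ * ‖T x‖^2 := by
        rw [hX]
        simp only [ContinuousLinearMap.sub_apply, ContinuousLinearMap.smul_apply,
          ContinuousLinearMap.one_apply, inner_sub_left, real_inner_smul_left,
          real_inner_self_eq_norm_sq, hAinner]
      have h2 : (0:ℝ) ≤ ‖T x‖ ^ 2 := sq_nonneg _
      have h3 : ‖T x‖ ^ 2 ≤ r * ‖x‖ ^ 2 := by
        rw [← hAinner]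
        calc ⟪A x, x⟫ ≤ ‖A x‖ * ‖x‖ := real_inner_le_norm _ _
          _ ≤ (‖A‖ * ‖x‖) * ‖x‖ := by
              have := A.le_opNorm x
              exact mul_le_mul_of_nonneg_right this (norm_nonneg _)
          _ = r * ‖x‖ ^ 2 := by rw [hr]; ring
      have h4 : r⁻¹ * ‖T x‖ ^ 2 ≤ ‖x‖ ^ 2 := by
        have h5 := mul_le_mul_of_nonneg_left h3 (inv_nonneg.2 hApos.le)
        rwa [← mul_assoc, inv_mul_cancel₀ hApos.ne', one_mul] at h5
      have h6 : (0:ℝ) ≤ r⁻¹ * ‖T x‖ ^ 2 := by positivity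
      rw [h1, one_mul, abs_le]
      constructor <;> nlinarith
    have hXnorm : ‖X‖ ≤ 1 := norm_le_of_selfAdjoint hXsymm zero_le_one hXquad
    set P0 := sqrtOneSub X with hP0
    have hP0sq : P0 * P0 = 1 - X := sqrtOneSub_sq hXnorm
    have hP0sa : IsSelfAdjoint P0 := sqrtOneSub_selfAdjoint hXnorm hXsa
    have hP0pos : ∀ x, (0:ℝ) ≤ ⟪x, P0 x⟫ := sqrtOneSub_inner_nonneg hXnorm
    set P : E →L[ℝ] E := Real.sqrt r • P0 with hP
    have hPsq : P * P = A := by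
      rw [hP, smul_mul_assoc, mul_smul_comm, smul_smul, Real.mul_self_sqrt hApos.le, hP0sq]
      rw [hX, sub_sub_cancel, smul_smul, mul_inv_cancel₀ hApos.ne', one_smul]
    have hPsa : IsSelfAdjoint P := IsSelfAdjoint.smul (star_trivial _) hP0sa
    have hPpos : ∀ x, (0:ℝ) ≤ ⟪x, P x⟫ := by
      intro x
      rw [hP, ContinuousLinearMap.smul_apply, real_inner_smul_right]
      exact mul_nonneg (Real.sqrt_nonneg _) (hP0pos x)
    have hPA : P * A = A * P := by rw [← hPsq, ← mul_assoc]
    obtain ⟨a, ha⟩ := hAunit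
    have hcommPa : Commute P (↑a : E →L[ℝ] E) := by rw [ha]; exact hPA
    have hcommPainv : Commute P (↑a⁻¹ : E →L[ℝ] E) := hcommPa.units_inv_right
    have hPPa : P * (P * ↑a⁻¹) = 1 := by
      rw [← mul_assoc, hPsq, ← ha]; exact a.mul_inv
    have hPunit : IsUnit P := by
      refine isUnit_iff_exists.2 ⟨P * ↑a⁻¹, hPPa, ?_⟩
      calc (P * ↑a⁻¹) * P = P * (↑a⁻¹ * P) := mul_assoc _ _ _
        _ = P * (P * ↑a⁻¹) := by rw [← hcommPainv.eq]
        _ = 1 := hPPa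
    obtain ⟨p, hp⟩ := hPunit
    set Q : E →L[ℝ] E := ↑p⁻¹ with hQ
    have hPQ : P * Q = 1 := by rw [← hp]; exact p.mul_inv
    have hQP : Q * P = 1 := by rw [← hp]; exact p.inv_mul
    have hsQ : star Q * P = 1 := by
      rw [← hPsa.star_eq, ← star_mul, hPQ, star_one]
    have hQsa : star Q = Q := by
      calc star Q = star Q * (P * Q) := by rw [hPQ, mul_one]
        _ = (star Q * P) * Q := (mul_assoc _ _ _).symm
        _ = Q := by rw [hsQ, one_mul]
    have hUadj : adjoint (T * Q) = Q * adjoint T := by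
      rw [← star_eq_adjoint, star_mul, hQsa, star_eq_adjoint]
    have h1S : (1 : E →L[ℝ] E) + (P - 1) = P := by abel
    refine ⟨T * Q, P - 1, ⟨?_, ?_⟩, hPsa.sub (IsSelfAdjoint.one (R := E →L[ℝ] E)), ?_, ?_, ?_⟩
    · rw [hUadj]
      calc Q * adjoint T * (T * Q) = Q * ((adjoint T * T) * Q) := by simp only [mul_assoc]
        _ = Q * ((P * P) * Q) := by rw [← hA, ← hPsq]
        _ = Q * (P * (P * Q)) := by rw [mul_assoc]
        _ = Q * P := by rw [hPQ, mul_one]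
        _ = 1 := hQP
    · rw [hUadj]
      have hQQA : (Q * Q) * A = 1 := by
        rw [← hPsq]
        calc Q * Q * (P * P) = Q * ((Q * P) * P) := by simp only [mul_assoc]
          _ = 1 := by rw [hQP, one_mul, hQP]
      have hQQc : Q * Q = c := by
        calc Q * Q = (Q * Q) * (A * c) := by rw [hAc, mul_one]
          _ = ((Q * Q) * A) * c := (mul_assoc _ _ _).symm
          _ = c := by rw [hQQA, one_mul]
      calc (T * Q) * (Q * adjoint T) = T * ((Q * Q) * adjoint T) := by simp only [mul_assoc]
        _ = T * (c * adjoint T) := by rw [hQQc]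
        _ = T * (T' * (star T' * star T)) := by
            rw [hc, ← star_eq_adjoint]; simp only [mul_assoc]
        _ = T * T' := by rw [hsT'T, mul_one]
        _ = 1 := hTT'
    · -- IsHilbertSchmidt (P - 1)
      have hP1unit : IsUnit (P + 1) := by
        apply isUnit_of_coercive
        intro x
        rw [ContinuousLinearMap.add_apply, ContinuousLinearMap.one_apply, inner_add_left,
          real_inner_self_eq_norm_sq]
        have h1 := hPpos x
        rw [real_inner_comm] at h1
        linarith
      obtain ⟨w, hw⟩ := hP1unit
      set W : E →L[ℝ] E := (↑w⁻¹ : E →L[ℝ] E) with hWdef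
      have hwinv : (P + 1) * W = 1 := by rw [hWdef, ← hw]; exact w.mul_inv
      have hfact1 : (P - 1) * (P + 1) = A - 1 := by
        rw [← hPsq, sub_mul, mul_add, one_mul, mul_one]
        abel
      have hfact2 : P - 1 = (A - 1) * W := by
        calc P - 1 = (P - 1) * ((P + 1) * W) := by rw [hwinv, mul_one]
          _ = ((P - 1) * (P + 1)) * W := (mul_assoc _ _ _).symm
          _ = (A - 1) * W := by rw [hfact1]
      have hfact3 : A - 1 = adjoint T * ((T * adjoint T - 1) * star T') := by
        rw [hA, ← star_eq_adjoint]
        have e1 : (T * star T - 1) * star T' = T * (star T * star T') - star T' := by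
          rw [sub_mul, one_mul, mul_assoc]
        rw [e1, hsTT', mul_one, mul_sub, hsTT']
      have hHS1 : IsHilbertSchmidt ((T * adjoint T - 1) * (star T' * W)) :=
        hs_comp_right _ hK
      have hHS2 : IsHilbertSchmidt (adjoint T * ((T * adjoint T - 1) * (star T' * W))) :=
        hs_comp_left _ hHS1
      have hfinal : P - 1 = adjoint T * ((T * adjoint T - 1) * (star T' * W)) := by
        rw [hfact2, hfact3]; simp only [mul_assoc]
      rw [hfinal]
      exact hHS2
    · rw [h1S]
      exact ⟨p, hp⟩
    · rw [h1S, mul_assoc, hQP, mul_one]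
  · rintro ⟨U, S, ⟨hU1, hU2⟩, hSsa, hShs, hSunit, hTdef⟩
    have hUunit : IsUnit U := isUnit_iff_exists.2 ⟨adjoint U, hU2, hU1⟩
    constructor
    · rw [hTdef]; exact hUunit.mul hSunit
    · have hadj : adjoint T = (1 + S) * adjoint U := by
        rw [hTdef]
        simp only [← star_eq_adjoint]
        rw [star_mul, star_add, star_one, hSsa.star_eq]
      have hkey : T * adjoint T - 1 = U * (S + 2) * S * adjoint U := by
        rw [hadj, hTdef]
        calc U * (1 + S) * ((1 + S) * adjoint U) - 1
            = U * (1 + S) * ((1 + S) * adjoint U) - U * adjoint U := by rw [hU2]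
          _ = U * (S + 2) * S * adjoint U := by noncomm_ring
      rw [hkey]
      have h1 := hs_comp_left (U * (S + 2)) hShs
      have h2 := hs_comp_right (adjoint U) h1
      have h3 : U * (S + 2) * S * adjoint U = (U * (S + 2)) * S * adjoint U := by
        simp only [mul_assoc]
      rw [h3]
      exact h2
end

section
/- Let A, Ã be densely defined self-adjoint positive definite operators with compact inverses on a Hilbert space E with dom(A) = dom(Ã), and suppose Ã − A is bounded on E. Then for every α ∈ (0,1) the operator Ã^α − A^α is bounded on E. -/
open Filter

noncomputable section

variable {E : Type*} [NormedAddCommGroup E] [InnerProductSpace ℂ E] [CompleteSpace E]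

/-- The spectral fractional power `A^s` of the positive operator diagonalized by the Hilbert
basis `e` with eigenvalues `lam`, applied to `x` (junk value outside the domain). -/
def diagPow (e : HilbertBasis ℕ ℂ E) (lam : ℕ → ℝ) (s : ℝ) (x : E) : E :=
  ∑' j, (((lam j ^ s : ℝ) : ℂ) * (inner ℂ (e j) x : ℂ)) • e j

/-- Membership of `x` in the domain of the spectral fractional power `A^s`. -/
def inDom (e : HilbertBasis ℕ ℂ E) (lam : ℕ → ℝ) (s : ℝ) (x : E) : Prop :=
  Summable fun j => (((lam j ^ s : ℝ) : ℂ) * (inner ℂ (e j) x : ℂ)) • e j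

section Stmt12AuxSection

open MeasureTheory Set Topology

set_option linter.unusedSectionVars false
set_option linter.unusedVariables false
set_option maxHeartbeats 2000000

namespace Stmt12Aux

lemma summable_smul_iff (b : HilbertBasis ℕ ℂ E) (c : ℕ → ℂ) :
    Summable (fun j => c j • (b j : E)) ↔ Summable (fun j => ‖c j‖ ^ 2) := by
  simpa [LinearIsometry.toSpanSingleton_apply] using
    (b.orthonormal.orthogonalFamily).summable_iff_norm_sq_summable c

lemma inner_basis (b : HilbertBasis ℕ ℂ E) (i j : ℕ) :
    (inner ℂ (b i) (b j) : ℂ) = if i = j then 1 else 0 :=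
  orthonormal_iff_ite.mp b.orthonormal i j

lemma inner_tsum (b : HilbertBasis ℕ ℂ E) {c : ℕ → ℂ}
    (h : Summable fun j => c j • (b j : E)) (i : ℕ) :
    (inner ℂ (b i) (∑' j, c j • (b j : E)) : ℂ) = c i := by
  have h1 : (inner ℂ (b i) (∑' j, c j • (b j : E)) : ℂ)
      = ∑' j, (inner ℂ (b i) (c j • (b j : E)) : ℂ) :=
    (innerSL ℂ (b i)).map_tsum h
  rw [h1]
  rw [tsum_eq_single i (fun j hj => by
    rw [inner_smul_right, inner_basis b i j, if_neg (Ne.symm hj), mul_zero])]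
  rw [inner_smul_right, inner_basis b i i, if_pos rfl, mul_one]

lemma expansion (b : HilbertBasis ℕ ℂ E) (x : E) :
    HasSum (fun j => (inner ℂ (b j) x : ℂ) • (b j : E)) x := by
  have := b.hasSum_repr x
  simpa [b.repr_apply_apply] using this

lemma summable_coeff (b : HilbertBasis ℕ ℂ E) (x : E) :
    Summable (fun j => (inner ℂ (b j) x : ℂ) • (b j : E)) :=
  (expansion b x).summable

lemma norm_sq_tsum (b : HilbertBasis ℕ ℂ E) {c : ℕ → ℂ}
    (h : Summable fun j => c j • (b j : E)) :
    ‖∑' j, c j • (b j : E)‖ ^ 2 = ∑' j, ‖c j‖ ^ 2 := by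
  set y := ∑' j, c j • (b j : E) with hy
  have hrepr : ∀ i, b.repr y i = c i := by
    intro i
    rw [b.repr_apply_apply]
    exact inner_tsum b h i
  have h2 : ‖y‖ = ‖b.repr y‖ := (b.repr.norm_map y).symm
  have h3 : ‖b.repr y‖ ^ 2 = ∑' i, ‖b.repr y i‖ ^ 2 := by
    have := lp.norm_rpow_eq_tsum (p := 2) (by norm_num) (b.repr y)
    simpa [Real.rpow_natCast] using this
  rw [h2, h3]
  simp_rw [hrepr]

lemma ext_coeff (b : HilbertBasis ℕ ℂ E) {y z : E}
    (h : ∀ i, (inner ℂ (b i) y : ℂ) = inner ℂ (b i) z) : y = z := by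
  have : b.repr y = b.repr z := by
    ext i
    rw [b.repr_apply_apply, b.repr_apply_apply]
    exact h i
  exact b.repr.injective this

lemma norm_sq_eq (b : HilbertBasis ℕ ℂ E) (x : E) :
    ‖x‖ ^ 2 = ∑' j, ‖(inner ℂ (b j) x : ℂ)‖ ^ 2 := by
  have h := summable_coeff b x
  have := norm_sq_tsum b h
  rwa [(expansion b x).tsum_eq] at this


/-- summability of Bessel coefficients squared -/
lemma bessel (b : HilbertBasis ℕ ℂ E) (x : E) :
    Summable (fun j => ‖(inner ℂ (b j) x : ℂ)‖ ^ 2) :=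
  (summable_smul_iff b _).mp (summable_coeff b x)

/-- A diagonal operator with bounded real symbol: summability. -/
lemma dSummable (b : HilbertBasis ℕ ℂ E) {c : ℕ → ℝ} {M : ℝ}
    (hc : ∀ j, |c j| ≤ M) (x : E) :
    Summable fun j => (((c j : ℝ) : ℂ) * (inner ℂ (b j) x : ℂ)) • (b j : E) := by
  apply (summable_smul_iff b (fun j => ((c j : ℝ) : ℂ) * (inner ℂ (b j) x : ℂ))).mpr
  refine Summable.of_nonneg_of_le (fun j => by positivity) (fun j => ?_)
    ((bessel b x).mul_left (M ^ 2))
  have h1 : ‖((c j : ℂ)) * (inner ℂ (b j) x : ℂ)‖ = |c j| * ‖(inner ℂ (b j) x : ℂ)‖ := by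
    rw [norm_mul, Complex.norm_real, Real.norm_eq_abs]
  rw [h1, mul_pow]
  have h2 : |c j| ^ 2 ≤ M ^ 2 := pow_le_pow_left₀ (abs_nonneg _) (hc j) 2
  exact mul_le_mul_of_nonneg_right h2 (by positivity)

lemma inner_dtsum (b : HilbertBasis ℕ ℂ E) {c : ℕ → ℝ} (x : E)
    (h : Summable fun j => (((c j : ℝ) : ℂ) * (inner ℂ (b j) x : ℂ)) • (b j : E)) (i : ℕ) :
    (inner ℂ (b i) (∑' j, (((c j : ℝ) : ℂ) * (inner ℂ (b j) x : ℂ)) • (b j : E)) : ℂ)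
      = (c i : ℂ) * (inner ℂ (b i) x : ℂ) :=
  inner_tsum b h i

lemma norm_dtsum_le (b : HilbertBasis ℕ ℂ E) {c : ℕ → ℝ} {M : ℝ}
    (hc : ∀ j, |c j| ≤ M) (hM : 0 ≤ M) (x : E) :
    ‖∑' j, (((c j : ℝ) : ℂ) * (inner ℂ (b j) x : ℂ)) • (b j : E)‖ ≤ M * ‖x‖ := by
  have hs := dSummable b hc x
  have h1 := norm_sq_tsum b hs
  have h2 : ∑' j, ‖((c j : ℂ)) * (inner ℂ (b j) x : ℂ)‖ ^ 2
      ≤ ∑' j, M ^ 2 * ‖(inner ℂ (b j) x : ℂ)‖ ^ 2 := by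
    apply Summable.tsum_le_tsum _ ((summable_smul_iff b _).mp hs) ((bessel b x).mul_left _)
    intro j
    rw [norm_mul, Complex.norm_real, Real.norm_eq_abs, mul_pow]
    have h2 : |c j| ^ 2 ≤ M ^ 2 := pow_le_pow_left₀ (abs_nonneg _) (hc j) 2
    exact mul_le_mul_of_nonneg_right h2 (by positivity)
  rw [tsum_mul_left, ← norm_sq_eq b x] at h2
  have h3 : ‖∑' j, (((c j : ℝ) : ℂ) * (inner ℂ (b j) x : ℂ)) • (b j : E)‖ ^ 2
      ≤ (M * ‖x‖) ^ 2 := by rw [h1, mul_pow]; exact h2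
  have h4 : (0:ℝ) ≤ M * ‖x‖ := by positivity
  nlinarith [norm_nonneg (∑' j, (((c j : ℝ) : ℂ) * (inner ℂ (b j) x : ℂ)) • (b j : E))]


/-- The kernel `t^(α-1) * a/(a+t)`. -/
def kker (α a t : ℝ) : ℝ := t ^ (α - 1) * (a / (a + t))

lemma kker_nonneg {α a : ℝ} (ha : 0 < a) {t : ℝ} (ht : 0 < t) : 0 ≤ kker α a t := by
  unfold kker; positivity

lemma kker_continuousOn {α a : ℝ} (ha : 0 < a) : ContinuousOn (kker α a) (Ioi 0) := by
  intro t ht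
  have ht' : (0:ℝ) < t := ht
  apply ContinuousAt.continuousWithinAt
  apply ContinuousAt.mul
  · exact Real.continuousAt_rpow_const t (α - 1) (Or.inl ht'.ne')
  · exact (continuousAt_const.div (continuousAt_const.add continuousAt_id)
      (by show a + t ≠ 0; positivity)).comp continuousAt_id |>.congr (by filter_upwards with s; rfl)

lemma kker_integrableOn {α a : ℝ} (hα1 : 0 < α) (hα2 : α < 1) (ha : 0 < a) :
    IntegrableOn (kker α a) (Ioi 0) := by
  have hmeas : ∀ s ⊆ Ioi (0:ℝ), MeasurableSet s → AEStronglyMeasurable (kker α a) (volume.restrict s) :=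
    fun s hs hsm => ((kker_continuousOn ha).mono hs).aestronglyMeasurable hsm
  have hsplit : Ioi (0:ℝ) = Ioc 0 1 ∪ Ioi 1 := (Ioc_union_Ioi_eq_Ioi zero_le_one).symm
  rw [hsplit]
  apply IntegrableOn.union
  · -- on (0,1]: dominated by t^(α-1)
    have hint : IntegrableOn (fun t : ℝ => t ^ (α - 1)) (Ioc 0 1) := by
      have := intervalIntegral.intervalIntegrable_rpow' (a := 0) (b := 1) (r := α - 1) (by linarith)
      rwa [intervalIntegrable_iff_integrableOn_Ioc_of_le zero_le_one] at this
    apply Integrable.mono' hint (hmeas _ (by rw [hsplit]; exact subset_union_left) measurableSet_Ioc)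
    filter_upwards [ae_restrict_mem measurableSet_Ioc] with t ht
    have ht0 : 0 < t := ht.1
    rw [Real.norm_eq_abs, abs_of_nonneg (kker_nonneg ha ht0)]
    unfold kker
    have h1 : a / (a + t) ≤ 1 := by
      rw [div_le_one (by linarith)]; linarith
    calc t ^ (α - 1) * (a / (a + t)) ≤ t ^ (α - 1) * 1 :=
          mul_le_mul_of_nonneg_left h1 (by positivity)
      _ = t ^ (α - 1) := mul_one _
  · -- on (1,∞): dominated by a * t^(α-2)
    have hint : IntegrableOn (fun t : ℝ => a * t ^ (α - 2)) (Ioi 1) :=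
      (integrableOn_Ioi_rpow_of_lt (by linarith) one_pos).const_mul a
    apply Integrable.mono' hint (hmeas _ (by rw [hsplit]; exact subset_union_right) measurableSet_Ioi)
    filter_upwards [ae_restrict_mem measurableSet_Ioi] with t ht
    have ht0 : (0:ℝ) < t := lt_trans one_pos ht
    rw [Real.norm_eq_abs, abs_of_nonneg (kker_nonneg ha ht0)]
    unfold kker
    have h1 : a / (a + t) ≤ a / t := by
      apply div_le_div_of_nonneg_left ha.le ht0; linarith
    have h2 : t ^ (α - 2) = t ^ (α - 1) * t⁻¹ := by
      rw [show α - 2 = (α - 1) + (-1) by ring, Real.rpow_add ht0, Real.rpow_neg_one]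
    calc t ^ (α - 1) * (a / (a + t)) ≤ t ^ (α - 1) * (a / t) :=
          mul_le_mul_of_nonneg_left h1 (by positivity)
      _ = a * t ^ (α - 2) := by rw [h2]; field_simp

/-- The universal constant `c₀ = ∫₀^∞ t^(α-1)/(1+t) dt`. -/
def c0 (α : ℝ) : ℝ := ∫ t in Ioi (0:ℝ), kker α 1 t

lemma c0_pos {α : ℝ} (hα1 : 0 < α) (hα2 : α < 1) : 0 < c0 α := by
  have hint := kker_integrableOn (a := 1) hα1 hα2 one_pos
  rw [c0, setIntegral_pos_iff_support_of_nonneg_ae _ hint]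
  · have hsub : Ioi (0:ℝ) ⊆ Function.support (kker α 1) ∩ Ioi 0 := by
      intro t ht
      refine ⟨?_, ht⟩
      have ht' : (0:ℝ) < t := ht
      have : 0 < kker α 1 t := by unfold kker; positivity
      exact this.ne'
    calc (0:ENNReal) < volume (Ioi (0:ℝ)) := by simp
      _ ≤ volume (Function.support (kker α 1) ∩ Ioi 0) := measure_mono hsub
  · filter_upwards [ae_restrict_mem measurableSet_Ioi] with t ht
    exact kker_nonneg one_pos ht

lemma kker_integral {α a : ℝ} (hα1 : 0 < α) (hα2 : α < 1) (ha : 0 < a) :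
    ∫ t in Ioi (0:ℝ), kker α a t = a ^ α * c0 α := by
  have h := integral_comp_mul_left_Ioi (kker α a) 0 ha
  rw [mul_zero] at h
  have h2 : ∫ x in Ioi (0:ℝ), kker α a (a * x) = a ^ (α - 1) * c0 α := by
    rw [c0, ← integral_const_mul]
    apply setIntegral_congr_fun measurableSet_Ioi
    intro x hx
    have hx' : (0:ℝ) < x := hx
    unfold kker
    dsimp only
    rw [Real.mul_rpow ha.le hx'.le]
    have h3 : a / (a + a * x) = 1 / (1 + x) := by
      rw [div_eq_div_iff (by positivity) (by positivity)]; ring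
    rw [h3]; ring
  rw [h2] at h
  have ha' : a ≠ 0 := ha.ne'
  have h5 : a ^ (α:ℝ) = a ^ (1 + (α - 1)) := by rw [show 1 + (α - 1) = α by ring]
  rw [h5, Real.rpow_add ha, Real.rpow_one]
  rw [smul_eq_mul] at h
  field_simp at h ⊢
  linarith [h]

/-- The difference kernel `t^α (a-b)/((a+t)(b+t))`. -/
def gdiff (α a b t : ℝ) : ℝ := t ^ α * ((a - b) * ((a + t)⁻¹ * (b + t)⁻¹))

lemma gdiff_eq {α a b : ℝ} (ha : 0 < a) (hb : 0 < b) {t : ℝ} (ht : 0 < t) :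
    gdiff α a b t = kker α a t - kker α b t := by
  unfold gdiff kker
  have h1 : t ^ (α:ℝ) = t ^ (α - 1) * t := by
    rw [show t ^ (α:ℝ) = t ^ ((α - 1) + 1) by rw [show (α-1) + 1 = α by ring],
      Real.rpow_add_one ht.ne']
  rw [h1]
  have hat : a + t ≠ 0 := by positivity
  have hbt : b + t ≠ 0 := by positivity
  field_simp
  ring

lemma gdiff_integrableOn {α a b : ℝ} (hα1 : 0 < α) (hα2 : α < 1) (ha : 0 < a) (hb : 0 < b) :
    IntegrableOn (gdiff α a b) (Ioi 0) := by
  apply IntegrableOn.congr_fun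
    ((kker_integrableOn hα1 hα2 ha).sub (kker_integrableOn hα1 hα2 hb))
    (fun t ht => (gdiff_eq ha hb ht).symm) measurableSet_Ioi

lemma gdiff_integral {α a b : ℝ} (hα1 : 0 < α) (hα2 : α < 1) (ha : 0 < a) (hb : 0 < b) :
    ∫ t in Ioi (0:ℝ), gdiff α a b t = (a ^ α - b ^ α) * c0 α := by
  rw [setIntegral_congr_fun measurableSet_Ioi
    (fun t ht => gdiff_eq ha hb ht : EqOn (gdiff α a b) (fun t => kker α a t - kker α b t) _)]
  rw [integral_sub (kker_integrableOn hα1 hα2 ha) (kker_integrableOn hα1 hα2 hb),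
    kker_integral hα1 hα2 ha, kker_integral hα1 hα2 hb]
  ring

/-- Pointwise majorant for the resolvent product. -/
lemma resolvent_majorant {α d d' : ℝ} (hα1 : 0 < α) (hd : 0 < d) (hd' : 0 < d')
    {t : ℝ} (ht : 0 < t) :
    t ^ α * ((d' + t)⁻¹ * (d + t)⁻¹) ≤ d⁻¹ * kker α d t := by
  have h1 : t ^ (α:ℝ) = t ^ (α - 1) * t := by
    rw [show t ^ (α:ℝ) = t ^ ((α - 1) + 1) by rw [show (α-1) + 1 = α by ring],
      Real.rpow_add_one ht.ne']
  unfold kker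
  rw [h1]
  have key : t * ((d' + t)⁻¹ * (d + t)⁻¹) ≤ d⁻¹ * (d / (d + t)) := by
    have hr : d⁻¹ * (d / (d + t)) = (d + t)⁻¹ := by field_simp
    rw [hr]
    have h2 : t * (d' + t)⁻¹ ≤ 1 := by
      rw [mul_inv_le_iff₀ (by positivity), one_mul]; linarith
    calc t * ((d' + t)⁻¹ * (d + t)⁻¹) = (t * (d' + t)⁻¹) * (d + t)⁻¹ := by ring
      _ ≤ 1 * (d + t)⁻¹ := mul_le_mul_of_nonneg_right h2 (by positivity)
      _ = (d + t)⁻¹ := one_mul _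
  calc t ^ (α - 1) * t * ((d' + t)⁻¹ * (d + t)⁻¹)
      = t ^ (α - 1) * (t * ((d' + t)⁻¹ * (d + t)⁻¹)) := by ring
    _ ≤ t ^ (α - 1) * (d⁻¹ * (d / (d + t))) := mul_le_mul_of_nonneg_left key (by positivity)
    _ = d⁻¹ * (t ^ (α - 1) * (d / (d + t))) := by ring


lemma inDom_of_one (b : HilbertBasis ℕ ℂ E) {ν : ℕ → ℝ} {d : ℝ} (hd : 0 < d)
    (hν : ∀ j, d ≤ ν j) {α : ℝ} (hα : α ≤ 1) {x : E} (h1 : inDom b ν 1 x) :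
    inDom b ν α x := by
  have h1' := (summable_smul_iff b
    (fun j => ((ν j ^ (1:ℝ) : ℝ) : ℂ) * (inner ℂ (b j) x : ℂ))).mp h1
  apply (summable_smul_iff b (fun j => ((ν j ^ α : ℝ) : ℂ) * (inner ℂ (b j) x : ℂ))).mpr
  refine Summable.of_nonneg_of_le (fun j => by positivity) (fun j => ?_)
    (h1'.mul_left ((d ^ (α - 1)) ^ 2))
  have hνp : 0 < ν j := lt_of_lt_of_le hd (hν j)
  have e1 : ν j ^ α = ν j ^ (α - 1) * ν j := by
    rw [show ν j ^ α = ν j ^ ((α - 1) + 1) by rw [show (α-1)+1 = α by ring],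
      Real.rpow_add_one hνp.ne']
  have e2 : ν j ^ (α - 1) ≤ d ^ (α - 1) := Real.rpow_le_rpow_of_nonpos hd (hν j) (by linarith)
  have e3 : ν j ^ α ≤ d ^ (α - 1) * ν j := by
    rw [e1]; exact mul_le_mul_of_nonneg_right e2 hνp.le
  rw [norm_mul, norm_mul, Complex.norm_real, Complex.norm_real, Real.norm_eq_abs,
    Real.norm_eq_abs, Real.rpow_one, abs_of_pos (Real.rpow_pos_of_pos hνp α),
    abs_of_pos hνp, mul_pow, mul_pow]
  have e4 : (ν j ^ α) ^ 2 ≤ (d ^ (α - 1)) ^ 2 * ν j ^ 2 := by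
    rw [← mul_pow]
    exact pow_le_pow_left₀ (Real.rpow_pos_of_pos hνp α).le e3 2
  calc (ν j ^ α) ^ 2 * ‖(inner ℂ (b j) x : ℂ)‖ ^ 2
      ≤ ((d ^ (α - 1)) ^ 2 * ν j ^ 2) * ‖(inner ℂ (b j) x : ℂ)‖ ^ 2 :=
        mul_le_mul_of_nonneg_right e4 (by positivity)
    _ = (d ^ (α - 1)) ^ 2 * (ν j ^ 2 * ‖(inner ℂ (b j) x : ℂ)‖ ^ 2) := by ring

lemma lower_bound (ν : ℕ → ℝ) (h0 : ∀ j, 0 < ν j) (hinf : Tendsto ν atTop atTop) :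
    ∃ d : ℝ, 0 < d ∧ ∀ j, d ≤ ν j := by
  obtain ⟨N, hN⟩ := eventually_atTop.mp (hinf.eventually_ge_atTop 1)
  classical
  set S : Finset ℝ := insert (1:ℝ) ((Finset.range N).image ν) with hS
  have hSne : S.Nonempty := ⟨1, Finset.mem_insert_self _ _⟩
  refine ⟨S.min' hSne, ?_, ?_⟩
  · have hmem := S.min'_mem hSne
    rcases Finset.mem_insert.mp hmem with h | h
    · rw [h]; norm_num
    · obtain ⟨j, _, hj⟩ := Finset.mem_image.mp h
      rw [← hj]; exact h0 j
  · intro j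
    by_cases hj : j < N
    · exact Finset.min'_le _ _
        (Finset.mem_insert_of_mem (Finset.mem_image_of_mem ν (Finset.mem_range.mpr hj)))
    · calc S.min' hSne ≤ 1 := Finset.min'_le _ _ (Finset.mem_insert_self _ _)
        _ ≤ ν j := hN j (le_of_not_gt hj)

lemma inDom_sub (b : HilbertBasis ℕ ℂ E) (ν : ℕ → ℝ) (σ : ℝ) {u v : E}
    (hu : inDom b ν σ u) (hv : inDom b ν σ v) : inDom b ν σ (u - v) := by
  unfold inDom at *
  apply Summable.congr (hu.sub hv)
  intro j
  rw [inner_sub_right, mul_sub, sub_smul]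

lemma diagPow_sub (b : HilbertBasis ℕ ℂ E) (ν : ℕ → ℝ) (σ : ℝ) {u v : E}
    (hu : inDom b ν σ u) (hv : inDom b ν σ v) :
    diagPow b ν σ (u - v) = diagPow b ν σ u - diagPow b ν σ v := by
  unfold diagPow
  rw [← Summable.tsum_sub hu hv]
  apply tsum_congr
  intro j
  rw [inner_sub_right, mul_sub, sub_smul]


lemma inner_partial (b : HilbertBasis ℕ ℂ E) (x : E) (N i : ℕ) :
    (inner ℂ (b i) (∑ k ∈ Finset.range N, (inner ℂ (b k) x : ℂ) • (b k : E)) : ℂ)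
      = if i ∈ Finset.range N then (inner ℂ (b i) x : ℂ) else 0 := by
  rw [inner_sum]
  rw [Finset.sum_congr rfl (fun k _ => show (inner ℂ (b i) ((inner ℂ (b k) x : ℂ) • (b k : E)) : ℂ)
      = if i = k then (inner ℂ (b k) x : ℂ) else 0 by
    rw [inner_smul_right, inner_basis b i k]
    split
    · rw [mul_one]
    · rw [mul_zero])]
  rw [Finset.sum_ite_eq]


lemma core (e f : HilbertBasis ℕ ℂ E) (lam mu : ℕ → ℝ) {δ δt : ℝ}
    (hδ : 0 < δ) (hδt : 0 < δt) (hlamδ : ∀ j, δ ≤ lam j) (hmuδ : ∀ j, δt ≤ mu j)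
    (hdom : ∀ x, inDom e lam 1 x ↔ inDom f mu 1 x)
    {C : ℝ} (hC : 0 ≤ C)
    (hB : ∀ x, inDom e lam 1 x → ‖diagPow f mu 1 x - diagPow e lam 1 x‖ ≤ C * ‖x‖)
    {α : ℝ} (hα1 : 0 < α) (hα2 : α < 1)
    (x : E) (s : Finset ℕ) (hsupp : ∀ k ∉ s, (inner ℂ (e k) x : ℂ) = 0) :
    ‖diagPow f mu α x - diagPow e lam α x‖ ≤ (C * δ⁻¹ * δ ^ α) * ‖x‖ := by
  have hlam0 : ∀ j, 0 < lam j := fun j => lt_of_lt_of_le hδ (hlamδ j)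
  have hmu0 : ∀ j, 0 < mu j := fun j => lt_of_lt_of_le hδt (hmuδ j)
  -- facts about x
  have h_xdom : ∀ σ : ℝ, inDom e lam σ x := fun σ =>
    summable_of_ne_finset_zero (s := s) (fun k hk => by rw [hsupp k hk, mul_zero, zero_smul])
  have x_eq : x = ∑ k ∈ s, (inner ℂ (e k) x : ℂ) • (e k : E) :=
    (expansion e x).unique (hasSum_sum_of_ne_finset_zero
      (fun k hk => by rw [hsupp k hk, zero_smul]))
  have hPow_eq : ∀ σ : ℝ, diagPow e lam σ x
      = ∑ k ∈ s, (((lam k ^ σ : ℝ) : ℂ) * (inner ℂ (e k) x : ℂ)) • (e k : E) := fun σ =>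
    tsum_eq_sum (fun k hk => by rw [hsupp k hk, mul_zero, zero_smul])
  have hfx : ∀ i, (inner ℂ (f i) x : ℂ)
      = ∑ k ∈ s, (inner ℂ (f i) (e k) : ℂ) * (inner ℂ (e k) x : ℂ) := by
    intro i
    conv_lhs => rw [x_eq]
    rw [inner_sum]
    exact Finset.sum_congr rfl (fun k _ => by rw [inner_smul_right]; ring)
  have hfPow : ∀ (i : ℕ) (σ : ℝ), (inner ℂ (f i) (diagPow e lam σ x) : ℂ)
      = ∑ k ∈ s, ((lam k ^ σ : ℝ) : ℂ) * ((inner ℂ (f i) (e k) : ℂ) * (inner ℂ (e k) x : ℂ)) := by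
    intro i σ
    rw [hPow_eq σ, inner_sum]
    refine Finset.sum_congr rfl (fun k _ => ?_)
    rw [inner_smul_right]; ring
  have hx1' : inDom f mu 1 x := (hdom x).mp (h_xdom 1)
  have hxα' : inDom f mu α x := inDom_of_one f hδt hmuδ hα2.le hx1'
  have hfPowμ : ∀ i, (inner ℂ (f i) (diagPow f mu α x) : ℂ)
      = ((mu i ^ α : ℝ) : ℂ) * (inner ℂ (f i) x : ℂ) := fun i => inner_tsum f hxα' i
  -- the resolvent-type vectors
  set z : ℝ → E := fun t => ∑' j, ((((lam j + t)⁻¹ : ℝ) : ℂ) * (inner ℂ (e j) x : ℂ)) • (e j : E)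
    with hzdef
  set Bz : ℝ → E := fun t => diagPow f mu 1 (z t) - diagPow e lam 1 (z t) with hBzdef
  set w : ℝ → E := fun t => ∑' j, ((((mu j + t)⁻¹ : ℝ) : ℂ) * (inner ℂ (f j) (Bz t) : ℂ)) • (f j : E)
    with hwdef
  set G : ℝ → E := fun t => ((t ^ α : ℝ) : ℂ) • w t with hGdef
  -- symbol bounds
  have hsymb_lam : ∀ t : ℝ, 0 < t → ∀ j, |(lam j + t)⁻¹| ≤ (δ + t)⁻¹ := by
    intro t ht j
    have h0 : (0:ℝ) < lam j + t := by linarith [hlamδ j]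
    rw [abs_of_nonneg (inv_nonneg.mpr h0.le)]
    exact inv_anti₀ (by linarith) (by linarith [hlamδ j])
  have hsymb_mu : ∀ t : ℝ, 0 < t → ∀ j, |(mu j + t)⁻¹| ≤ (δt + t)⁻¹ := by
    intro t ht j
    have h0 : (0:ℝ) < mu j + t := by linarith [hmuδ j]
    rw [abs_of_nonneg (inv_nonneg.mpr h0.le)]
    exact inv_anti₀ (by linarith) (by linarith [hmuδ j])
  have hz_sum : ∀ t : ℝ, 0 < t →
      Summable fun j => ((((lam j + t)⁻¹ : ℝ) : ℂ) * (inner ℂ (e j) x : ℂ)) • (e j : E) :=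
    fun t ht => dSummable e (hsymb_lam t ht) x
  have hz_coeff : ∀ t : ℝ, 0 < t → ∀ i, (inner ℂ (e i) (z t) : ℂ)
      = (((lam i + t)⁻¹ : ℝ) : ℂ) * (inner ℂ (e i) x : ℂ) :=
    fun t ht i => inner_tsum e (hz_sum t ht) i
  have hz_norm : ∀ t : ℝ, 0 < t → ‖z t‖ ≤ (δ + t)⁻¹ * ‖x‖ :=
    fun t ht => norm_dtsum_le e (hsymb_lam t ht) (by positivity) x
  have hz_dom1 : ∀ t : ℝ, 0 < t → inDom e lam 1 (z t) := by
    intro t ht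
    apply summable_of_ne_finset_zero (s := s)
    intro k hk
    rw [hz_coeff t ht k, hsupp k hk, mul_zero, mul_zero, zero_smul]
  have hz_dom1' : ∀ t : ℝ, 0 < t → inDom f mu 1 (z t) := fun t ht => (hdom _).mp (hz_dom1 t ht)
  have hBz_norm : ∀ t : ℝ, 0 < t → ‖Bz t‖ ≤ C * ((δ + t)⁻¹ * ‖x‖) := by
    intro t ht
    calc ‖Bz t‖ ≤ C * ‖z t‖ := hB (z t) (hz_dom1 t ht)
      _ ≤ C * ((δ + t)⁻¹ * ‖x‖) := mul_le_mul_of_nonneg_left (hz_norm t ht) hC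
  -- coefficients of Bz
  have hfz : ∀ t : ℝ, 0 < t → ∀ i, (inner ℂ (f i) (z t) : ℂ)
      = ∑ k ∈ s, (((lam k + t)⁻¹ : ℝ) : ℂ) * ((inner ℂ (f i) (e k) : ℂ) * (inner ℂ (e k) x : ℂ)) := by
    intro t ht i
    have hzeq : z t = ∑ k ∈ s, ((((lam k + t)⁻¹ : ℝ) : ℂ) * (inner ℂ (e k) x : ℂ)) • (e k : E) :=
      tsum_eq_sum (fun k hk => by rw [hsupp k hk, mul_zero, zero_smul])
    rw [hzeq, inner_sum]
    refine Finset.sum_congr rfl (fun k _ => ?_)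
    rw [inner_smul_right]; ring
  have hfAz : ∀ t : ℝ, 0 < t → ∀ i, (inner ℂ (f i) (diagPow e lam 1 (z t)) : ℂ)
      = ∑ k ∈ s, ((lam k : ℝ) : ℂ) * ((((lam k + t)⁻¹ : ℝ) : ℂ)
          * ((inner ℂ (f i) (e k) : ℂ) * (inner ℂ (e k) x : ℂ))) := by
    intro t ht i
    have hAzeq : diagPow e lam 1 (z t)
        = ∑ k ∈ s, (((lam k ^ (1:ℝ) : ℝ) : ℂ) * (inner ℂ (e k) (z t) : ℂ)) • (e k : E) :=
      tsum_eq_sum (fun k hk => by rw [hz_coeff t ht k, hsupp k hk, mul_zero, mul_zero, zero_smul])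
    rw [hAzeq, inner_sum]
    refine Finset.sum_congr rfl (fun k _ => ?_)
    rw [inner_smul_right, hz_coeff t ht k, Real.rpow_one]; ring
  have hBz_coeff : ∀ t : ℝ, 0 < t → ∀ i, (inner ℂ (f i) (Bz t) : ℂ)
      = ∑ k ∈ s, (((mu i - lam k) * (lam k + t)⁻¹ : ℝ) : ℂ)
          * ((inner ℂ (f i) (e k) : ℂ) * (inner ℂ (e k) x : ℂ)) := by
    intro t ht i
    have h1 : (inner ℂ (f i) (diagPow f mu 1 (z t)) : ℂ)
        = ((mu i ^ (1:ℝ) : ℝ) : ℂ) * (inner ℂ (f i) (z t) : ℂ) := inner_tsum f (hz_dom1' t ht) i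
    rw [hBzdef]
    simp only [inner_sub_right]
    rw [h1, hfz t ht i, hfAz t ht i, Finset.mul_sum, ← Finset.sum_sub_distrib]
    refine Finset.sum_congr rfl (fun k _ => ?_)
    rw [Real.rpow_one]; push_cast; ring
  -- facts about w
  have hw_sum : ∀ t : ℝ, 0 < t →
      Summable fun j => ((((mu j + t)⁻¹ : ℝ) : ℂ) * (inner ℂ (f j) (Bz t) : ℂ)) • (f j : E) :=
    fun t ht => dSummable f (hsymb_mu t ht) (Bz t)
  have hw_coeff : ∀ t : ℝ, 0 < t → ∀ i, (inner ℂ (f i) (w t) : ℂ)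
      = (((mu i + t)⁻¹ : ℝ) : ℂ) * (inner ℂ (f i) (Bz t) : ℂ) :=
    fun t ht i => inner_tsum f (hw_sum t ht) i
  have hw_norm : ∀ t : ℝ, 0 < t → ‖w t‖ ≤ (δt + t)⁻¹ * ‖Bz t‖ :=
    fun t ht => norm_dtsum_le f (hsymb_mu t ht) (by positivity) (Bz t)
  -- coefficients of G
  have hG_coeff : ∀ t : ℝ, 0 < t → ∀ i, (inner ℂ (f i) (G t) : ℂ)
      = ∑ k ∈ s, ((gdiff α (mu i) (lam k) t : ℝ) : ℂ)
          * ((inner ℂ (f i) (e k) : ℂ) * (inner ℂ (e k) x : ℂ)) := by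
    intro t ht i
    rw [hGdef]
    simp only [inner_smul_right]
    rw [hw_coeff t ht i, hBz_coeff t ht i, Finset.mul_sum, Finset.mul_sum]
    refine Finset.sum_congr rfl (fun k _ => ?_)
    unfold gdiff
    push_cast
    ring
  -- norm bound for G
  have hG_norm : ∀ t : ℝ, 0 < t → ‖G t‖ ≤ (C * ‖x‖ * δ⁻¹) * kker α δ t := by
    intro t ht
    have h1 : ‖G t‖ = t ^ α * ‖w t‖ := by
      rw [hGdef]
      simp only [norm_smul, Complex.norm_real, Real.norm_eq_abs,
        abs_of_nonneg (Real.rpow_nonneg ht.le α)]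
    rw [h1]
    have h2 : ‖w t‖ ≤ (δt + t)⁻¹ * (C * ((δ + t)⁻¹ * ‖x‖)) := by
      calc ‖w t‖ ≤ (δt + t)⁻¹ * ‖Bz t‖ := hw_norm t ht
        _ ≤ (δt + t)⁻¹ * (C * ((δ + t)⁻¹ * ‖x‖)) :=
            mul_le_mul_of_nonneg_left (hBz_norm t ht) (by positivity)
    calc t ^ α * ‖w t‖ ≤ t ^ α * ((δt + t)⁻¹ * (C * ((δ + t)⁻¹ * ‖x‖))) :=
          mul_le_mul_of_nonneg_left h2 (Real.rpow_nonneg ht.le α)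
      _ = (C * ‖x‖) * (t ^ α * ((δt + t)⁻¹ * (δ + t)⁻¹)) := by ring
      _ ≤ (C * ‖x‖) * (δ⁻¹ * kker α δ t) :=
          mul_le_mul_of_nonneg_left (resolvent_majorant hα1 hδ hδt ht) (by positivity)
      _ = (C * ‖x‖ * δ⁻¹) * kker α δ t := by ring
  -- measurability
  have hinv_cont : ∀ a : ℝ, 0 < a → ContinuousOn (fun t : ℝ => (((a + t)⁻¹ : ℝ) : ℂ)) (Ioi 0) := by
    intro a ha
    apply Complex.continuous_ofReal.comp_continuousOn
    apply ContinuousOn.inv₀ (continuous_const.add continuous_id).continuousOn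
    intro t ht
    have h3 : (0:ℝ) < t := ht
    exact (by linarith : (0:ℝ) < a + t).ne'
  have hterm_cont : ∀ j : ℕ, ContinuousOn
      (fun t : ℝ => ((((mu j + t)⁻¹ : ℝ) : ℂ) * (inner ℂ (f j) (Bz t) : ℂ)) • (f j : E)) (Ioi 0) := by
    intro j
    apply ContinuousOn.congr (f := fun t : ℝ =>
      ((((mu j + t)⁻¹ : ℝ) : ℂ) * (∑ k ∈ s, (((mu j - lam k) * (lam k + t)⁻¹ : ℝ) : ℂ)
        * ((inner ℂ (f j) (e k) : ℂ) * (inner ℂ (e k) x : ℂ)))) • (f j : E))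
    · apply ContinuousOn.smul _ continuousOn_const
      apply ContinuousOn.mul (hinv_cont (mu j) (hmu0 j))
      apply continuousOn_finset_sum
      intro k _
      apply ContinuousOn.mul _ continuousOn_const
      have : ContinuousOn (fun t : ℝ => (((lam k + t)⁻¹ : ℝ) : ℂ)) (Ioi 0) :=
        hinv_cont (lam k) (hlam0 k)
      have h2 : ContinuousOn (fun t : ℝ => (((mu j - lam k) * (lam k + t)⁻¹ : ℝ) : ℂ)) (Ioi 0) := by
        apply Complex.continuous_ofReal.comp_continuousOn
        apply ContinuousOn.mul continuousOn_const
        apply ContinuousOn.inv₀ (continuous_const.add continuous_id).continuousOn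
        intro t ht
        have h3 : (0:ℝ) < t := ht
        have h4 := hlam0 k
        exact (by linarith : (0:ℝ) < lam k + t).ne'
      exact h2
    · intro t ht
      have ht' : (0:ℝ) < t := ht
      simp only [hBz_coeff t ht' j]
  have hw_meas : AEStronglyMeasurable w (volume.restrict (Ioi 0)) := by
    apply aestronglyMeasurable_of_tendsto_ae (u := atTop)
      (f := fun n t => ∑ j ∈ Finset.range n,
        ((((mu j + t)⁻¹ : ℝ) : ℂ) * (inner ℂ (f j) (Bz t) : ℂ)) • (f j : E))
    · intro n
      exact (continuousOn_finset_sum _ (fun j _ => hterm_cont j)).aestronglyMeasurable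
        measurableSet_Ioi
    · filter_upwards [ae_restrict_mem measurableSet_Ioi] with t ht
      have ht' : (0:ℝ) < t := ht
      exact ((hw_sum t ht').hasSum).tendsto_sum_nat
  have hrpow_cont : ContinuousOn (fun t : ℝ => ((t ^ α : ℝ) : ℂ)) (Ioi 0) := by
    apply Complex.continuous_ofReal.comp_continuousOn
    intro t ht
    have ht' : (0:ℝ) < t := ht
    exact (Real.continuousAt_rpow_const t α (Or.inl ht'.ne')).continuousWithinAt
  have hG_meas : AEStronglyMeasurable G (volume.restrict (Ioi 0)) :=
    (hrpow_cont.aestronglyMeasurable measurableSet_Ioi).smul hw_meas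
  -- integrability
  have hbnd_int : IntegrableOn (fun t => (C * ‖x‖ * δ⁻¹) * kker α δ t) (Ioi 0) :=
    (kker_integrableOn hα1 hα2 hδ).const_mul _
  have hG_bound : ∀ᵐ t ∂(volume.restrict (Ioi (0:ℝ))),
      ‖G t‖ ≤ (C * ‖x‖ * δ⁻¹) * kker α δ t := by
    filter_upwards [ae_restrict_mem measurableSet_Ioi] with t ht
    exact hG_norm t ht
  have hG_int : IntegrableOn G (Ioi 0) := Integrable.mono' hbnd_int hG_meas hG_bound
  set I : E := ∫ t in Ioi (0:ℝ), G t with hIdef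
  have hI_norm : ‖I‖ ≤ (C * ‖x‖ * δ⁻¹) * (δ ^ α * c0 α) := by
    calc ‖I‖ ≤ ∫ t in Ioi (0:ℝ), (C * ‖x‖ * δ⁻¹) * kker α δ t :=
          norm_integral_le_of_norm_le hbnd_int hG_bound
      _ = (C * ‖x‖ * δ⁻¹) * ∫ t in Ioi (0:ℝ), kker α δ t := integral_const_mul _ _
      _ = (C * ‖x‖ * δ⁻¹) * (δ ^ α * c0 α) := by rw [kker_integral hα1 hα2 hδ]
  have hI_coeff : ∀ i, (inner ℂ (f i) I : ℂ)
      = ((c0 α : ℝ) : ℂ) * (inner ℂ (f i) (diagPow f mu α x - diagPow e lam α x) : ℂ) := by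
    intro i
    rw [hIdef, ← integral_inner hG_int (f i)]
    rw [setIntegral_congr_fun measurableSet_Ioi (g := fun t =>
      ∑ k ∈ s, ((gdiff α (mu i) (lam k) t : ℝ) : ℂ)
        * ((inner ℂ (f i) (e k) : ℂ) * (inner ℂ (e k) x : ℂ)))
      (fun t ht => hG_coeff t ht i)]
    rw [integral_finset_sum (f := fun k t => ((gdiff α (mu i) (lam k) t : ℝ) : ℂ)
        * ((inner ℂ (f i) (e k) : ℂ) * (inner ℂ (e k) x : ℂ))) s (fun k _ =>
      ((gdiff_integrableOn hα1 hα2 (hmu0 i) (hlam0 k)).ofReal.mul_const _))]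
    have hkint : ∀ k ∈ s, (∫ t in Ioi (0:ℝ), ((gdiff α (mu i) (lam k) t : ℝ) : ℂ)
        * ((inner ℂ (f i) (e k) : ℂ) * (inner ℂ (e k) x : ℂ)))
        = (((mu i ^ α - lam k ^ α) * c0 α : ℝ) : ℂ)
            * ((inner ℂ (f i) (e k) : ℂ) * (inner ℂ (e k) x : ℂ)) := by
      intro k _
      rw [integral_mul_const]
      congr 1
      rw [← gdiff_integral hα1 hα2 (hmu0 i) (hlam0 k)]
      exact integral_ofReal
    rw [Finset.sum_congr rfl hkint]
    rw [inner_sub_right, hfPowμ i, hfPow i α, hfx i]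
    simp only [mul_sub, Finset.mul_sum]
    rw [← Finset.sum_sub_distrib]
    refine Finset.sum_congr rfl (fun k _ => ?_)
    push_cast
    ring
  -- conclusion
  have hfinal : ((c0 α : ℝ) : ℂ) • (diagPow f mu α x - diagPow e lam α x) = I := by
    apply ext_coeff f
    intro i
    rw [inner_smul_right, hI_coeff i]
  have hc0 := c0_pos hα1 hα2
  have hnorm : c0 α * ‖diagPow f mu α x - diagPow e lam α x‖ ≤ (C * ‖x‖ * δ⁻¹) * (δ ^ α * c0 α) := by
    have h1 : ‖((c0 α : ℝ) : ℂ) • (diagPow f mu α x - diagPow e lam α x)‖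
        = c0 α * ‖diagPow f mu α x - diagPow e lam α x‖ := by
      rw [norm_smul, Complex.norm_real, Real.norm_eq_abs, abs_of_pos hc0]
    rw [← h1, hfinal]
    exact hI_norm
  have h2 : c0 α * ‖diagPow f mu α x - diagPow e lam α x‖
      ≤ c0 α * ((C * δ⁻¹ * δ ^ α) * ‖x‖) := by
    calc c0 α * ‖diagPow f mu α x - diagPow e lam α x‖
        ≤ (C * ‖x‖ * δ⁻¹) * (δ ^ α * c0 α) := hnorm
      _ = c0 α * ((C * δ⁻¹ * δ ^ α) * ‖x‖) := by ring
  exact le_of_mul_le_mul_left h2 hc0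

end Stmt12Aux

end Stmt12AuxSection

section Main

open MeasureTheory Set Topology Stmt12Aux

set_option linter.unusedSectionVars false
set_option linter.unusedVariables false
set_option maxHeartbeats 2000000

/-- If `A`, `Ã` are densely defined self-adjoint positive definite operators with compact
inverses (encoded by spectral data `(e, lam)`, `(f, mu)`), with equal domains
`dom(A) = dom(Ã)`, and `Ã − A` is bounded on `E`, then for every `α ∈ (0,1)` the operator
`Ã^α − A^α` is bounded on `E` (on its natural dense domain). -/
theorem stmt12 (e f : HilbertBasis ℕ ℂ E) (lam mu : ℕ → ℝ)
    (hlam : ∀ j, 0 < lam j) (hmu : ∀ j, 0 < mu j)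
    (hlam' : Tendsto lam atTop atTop) (hmu' : Tendsto mu atTop atTop)
    (hdom : ∀ x, inDom e lam 1 x ↔ inDom f mu 1 x)
    (hB : ∃ C : ℝ, ∀ x, inDom e lam 1 x →
      ‖diagPow f mu 1 x - diagPow e lam 1 x‖ ≤ C * ‖x‖) :
    ∀ α ∈ Set.Ioo (0 : ℝ) 1,
      ∃ C : ℝ, ∀ x, inDom e lam α x → inDom f mu α x →
        ‖diagPow f mu α x - diagPow e lam α x‖ ≤ C * ‖x‖ := by
  rintro α ⟨hα1, hα2⟩
  obtain ⟨δ, hδ, hlamδ⟩ := lower_bound lam hlam hlam'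
  obtain ⟨δt, hδt, hmuδ⟩ := lower_bound mu hmu hmu'
  obtain ⟨C, hC⟩ := hB
  have hB' : ∀ x, inDom e lam 1 x → ‖diagPow f mu 1 x - diagPow e lam 1 x‖ ≤ |C| * ‖x‖ :=
    fun x hx => (hC x hx).trans (mul_le_mul_of_nonneg_right (le_abs_self C) (norm_nonneg x))
  set K : ℝ := |C| * δ⁻¹ * δ ^ α with hK
  have hK0 : 0 ≤ K := by positivity
  refine ⟨K, ?_⟩
  intro x hxα hxα'
  -- partial sums
  set xN : ℕ → E := fun N => ∑ k ∈ Finset.range N, (inner ℂ (e k) x : ℂ) • (e k : E) with hxN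
  have hxNc : ∀ N i, (inner ℂ (e i) (xN N) : ℂ)
      = if i ∈ Finset.range N then (inner ℂ (e i) x : ℂ) else 0 := fun N i => inner_partial e x N i
  have hxN_supp : ∀ N, ∀ k ∉ Finset.range N, (inner ℂ (e k) (xN N) : ℂ) = 0 := by
    intro N k hk; rw [hxNc N k, if_neg hk]
  -- inDom facts for partial sums
  have hxN_dome : ∀ (N : ℕ) (σ : ℝ), inDom e lam σ (xN N) := by
    intro N σ
    apply summable_of_ne_finset_zero (s := Finset.range N)
    intro k hk
    rw [hxN_supp N k hk, mul_zero, zero_smul]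
  have hxN_domf : ∀ N, inDom f mu α (xN N) :=
    fun N => inDom_of_one f hδt hmuδ hα2.le ((hdom _).mp (hxN_dome N 1))
  -- core bound for partial sums
  have hcore : ∀ N, ‖diagPow f mu α (xN N) - diagPow e lam α (xN N)‖ ≤ K * ‖xN N‖ :=
    fun N => core e f lam mu hδ hδt hlamδ hmuδ hdom (abs_nonneg C) hB' hα1 hα2 (xN N)
      (Finset.range N) (hxN_supp N)
  -- convergence of xN to x
  have hxN_tendsto : Tendsto xN atTop (𝓝 x) := (expansion e x).tendsto_sum_nat
  -- diagPow e of partial sums = partial sums of diagPow series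
  have hA_eq : ∀ N, diagPow e lam α (xN N)
      = ∑ k ∈ Finset.range N, (((lam k ^ α : ℝ) : ℂ) * (inner ℂ (e k) x : ℂ)) • (e k : E) := by
    intro N
    unfold diagPow
    rw [tsum_eq_sum (s := Finset.range N)
      (fun k hk => by rw [hxN_supp N k hk, mul_zero, zero_smul])]
    refine Finset.sum_congr rfl (fun k hk => ?_)
    rw [hxNc N k, if_pos hk]
  have hA_tendsto : Tendsto (fun N => diagPow e lam α (xN N)) atTop
      (𝓝 (diagPow e lam α x)) := by
    have h1 := (hxα.hasSum).tendsto_sum_nat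
    apply h1.congr
    intro N
    rw [hA_eq N]
  -- Cauchy of D (xN N)
  set D : E → E := fun u => diagPow f mu α u - diagPow e lam α u with hD
  have hDdiff : ∀ N M, D (xN N) - D (xN M) = D (xN N - xN M) := by
    intro N M
    rw [hD]
    simp only
    rw [diagPow_sub f mu α (hxN_domf N) (hxN_domf M),
      diagPow_sub e lam α (hxN_dome N α) (hxN_dome M α)]
    abel
  have hsub_supp : ∀ N M, ∀ k ∉ Finset.range N ∪ Finset.range M,
      (inner ℂ (e k) (xN N - xN M) : ℂ) = 0 := by
    intro N M k hk
    rw [inner_sub_right, hxN_supp N k (fun h => hk (Finset.mem_union_left _ h)),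
      hxN_supp M k (fun h => hk (Finset.mem_union_right _ h)), sub_zero]
  have hDbound : ∀ N M, ‖D (xN N) - D (xN M)‖ ≤ K * ‖xN N - xN M‖ := by
    intro N M
    rw [hDdiff N M]
    exact core e f lam mu hδ hδt hlamδ hmuδ hdom (abs_nonneg C) hB' hα1 hα2 (xN N - xN M)
      (Finset.range N ∪ Finset.range M) (hsub_supp N M)
  have hcauchy : CauchySeq (fun N => D (xN N)) := by
    rw [Metric.cauchySeq_iff']
    intro ε hε
    obtain ⟨N₀, hN₀⟩ := Metric.cauchySeq_iff'.mp hxN_tendsto.cauchySeq (ε / (K + 1))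
      (by positivity)
    refine ⟨N₀, fun n hn => ?_⟩
    rw [dist_eq_norm]
    calc ‖D (xN n) - D (xN N₀)‖ ≤ K * ‖xN n - xN N₀‖ := hDbound n N₀
      _ ≤ K * (ε / (K + 1)) := by
          apply mul_le_mul_of_nonneg_left _ hK0
          rw [← dist_eq_norm]
          exact (hN₀ n hn).le
      _ < ε := by
          rw [div_eq_inv_mul, ← mul_assoc]
          have : K * (K + 1)⁻¹ < 1 := by
            rw [mul_inv_lt_iff₀ (by positivity), one_mul]; linarith
          nlinarith
  obtain ⟨L, hL⟩ := cauchySeq_tendsto_of_complete hcauchy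
  -- identify the limit of diagPow f mu α (xN N)
  have hy_lim : Tendsto (fun N => diagPow f mu α (xN N)) atTop
      (𝓝 (L + diagPow e lam α x)) := by
    have h1 : ∀ N, diagPow f mu α (xN N) = D (xN N) + diagPow e lam α (xN N) := by
      intro N; rw [hD]; simp only; abel
    simp only [h1]
    exact hL.add hA_tendsto
  have hy_id : L + diagPow e lam α x = diagPow f mu α x := by
    apply ext_coeff f
    intro i
    have hcont : Continuous fun u : E => (inner ℂ (f i) u : ℂ) := (innerSL ℂ (f i)).continuous
    have h2 : Tendsto (fun N => (inner ℂ (f i) (diagPow f mu α (xN N)) : ℂ)) atTop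
        (𝓝 (inner ℂ (f i) (L + diagPow e lam α x) : ℂ)) := (hcont.tendsto _).comp hy_lim
    have h3 : ∀ N, (inner ℂ (f i) (diagPow f mu α (xN N)) : ℂ)
        = ((mu i ^ α : ℝ) : ℂ) * (inner ℂ (f i) (xN N) : ℂ) :=
      fun N => inner_tsum f (hxN_domf N) i
    have h4 : Tendsto (fun N => (inner ℂ (f i) (diagPow f mu α (xN N)) : ℂ)) atTop
        (𝓝 (((mu i ^ α : ℝ) : ℂ) * (inner ℂ (f i) x : ℂ))) := by
      simp only [h3]
      exact (((hcont.tendsto _).comp hxN_tendsto).const_mul _)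
    have h5 := tendsto_nhds_unique h2 h4
    rw [h5]
    exact (inner_tsum f hxα' i).symm
  have hD_lim : Tendsto (fun N => D (xN N)) atTop (𝓝 (D x)) := by
    have : D x = L := by
      rw [hD]; simp only
      rw [← hy_id]; abel
    rwa [this]
  -- pass to the limit
  have hnorm_lim : Tendsto (fun N => ‖D (xN N)‖) atTop (𝓝 ‖D x‖) := hD_lim.norm
  have hrhs_lim : Tendsto (fun N => K * ‖xN N‖) atTop (𝓝 (K * ‖x‖)) :=
    (hxN_tendsto.norm).const_mul K
  exact le_of_tendsto_of_tendsto' hnorm_lim hrhs_lim hcore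


end Main

end
end
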